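/- arXiv:2208.13907 — 10 statements merged into one kernel-verified Lean document; each statement's English description precedes it below -/
import Mathlib

section
/- If S ⊆ V is a valid instrumentation set of a control-flow graph G, then every ambiguous vertex u of G belongs to S. (Equivalently: for any ambiguous vertex u there exist two coverage profiles C, C' ∈ 𝒞 that agree on all vertices except u.) -/
/-- A control-flow graph (CFG): a directed graph with a distinguished entry
vertex `s` (no incoming edges) and terminal vertex `t` (no outgoing edges),
`s ≠ t`, such that every vertex is reachable from `s` and every vertex can
reach `t` by a directed path. -/
structure CFG (V : Type*) where
  E : V → V → Prop
  s : V
  t : V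
  s_ne_t : s ≠ t
  no_in_s : ∀ v, ¬ E v s
  no_out_t : ∀ v, ¬ E t v
  reach_from_s : ∀ v, Relation.ReflTransGen E s v
  reach_to_t : ∀ v, Relation.ReflTransGen E v t

/-- The (vertex) coverage profile of a trace `T` (a finite collection of
walks, each walk given as a list of vertices): the set of vertices visited
by at least one walk of the trace. -/
def cover {V : Type*} (T : List (List V)) : Set V := {v | ∃ w ∈ T, v ∈ w}

/-- The edge coverage profile of a trace `T`: the set of (directed) edges
traversed by at least one walk of the trace. -/
def edgeCover {V : Type*} (T : List (List V)) : Set (V × V) :=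
  {p | ∃ w ∈ T, p ∈ w.zip w.tail}

namespace CFG

variable {V : Type*} (G : CFG V)

/-- `A u`: the set of vertices reachable from `s` by a directed path avoiding `u`. -/
def A (u : V) : Set V :=
  {v | v ≠ u ∧ Relation.ReflTransGen (fun x y => G.E x y ∧ x ≠ u ∧ y ≠ u) G.s v}

/-- `B u`: the set of vertices from which `t` is reachable by a directed path avoiding `u`. -/
def B (u : V) : Set V :=
  {v | v ≠ u ∧ Relation.ReflTransGen (fun x y => G.E x y ∧ x ≠ u ∧ y ≠ u) v G.t}

/-- Out-neighbors of `u`. -/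
def Nout (u : V) : Set V := {v | G.E u v}

/-- In-neighbors of `u`. -/
def Nin (u : V) : Set V := {v | G.E v u}

/-- An `s`-`t` walk: a nonempty list starting at `s`, ending at `t`, whose
consecutive vertices are joined by edges. -/
def IsWalk (w : List V) : Prop :=
  w.head? = some G.s ∧ w.getLast? = some G.t ∧ w.Chain' G.E

/-- An execution trace: a finite collection of `s`-`t` walks. -/
def IsTrace (T : List (List V)) : Prop := ∀ w ∈ T, G.IsWalk w

/-- `𝒞`: the family of all coverage profiles of execution traces. -/
def Profiles : Set (Set V) := {C | ∃ T, G.IsTrace T ∧ C = cover T}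

/-- `S` is a valid instrumentation set if any two coverage profiles agreeing
on `S` are equal. -/
def ValidInstr (S : Set V) : Prop :=
  ∀ C ∈ G.Profiles, ∀ C' ∈ G.Profiles, C ∩ S = C' ∩ S → C = C'

/-- A vertex `u` is ambiguous if some in-neighbor of `u` lies in `A u ∩ B u`
and some out-neighbor of `u` lies in `A u ∩ B u`. -/
def Ambiguous (u : V) : Prop :=
  (∃ x ∈ G.Nin u, x ∈ G.A u ∩ G.B u) ∧ (∃ y ∈ G.Nout u, y ∈ G.A u ∩ G.B u)

/-- `u` is forward inferable if `Nout u \ A u ≠ ∅` and `Nout u ∩ A u ∩ B u = ∅`. -/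
def FwdInferable (u : V) : Prop :=
  (G.Nout u \ G.A u).Nonempty ∧ G.Nout u ∩ (G.A u ∩ G.B u) = ∅

/-- `(u, v)` is a forward inference edge if `u` is forward inferable and
`v ∈ Nout u \ A u`. -/
def FwdEdge (u v : V) : Prop := G.FwdInferable u ∧ v ∈ G.Nout u \ G.A u

/-- `u` is backward inferable if `Nin u \ B u ≠ ∅` and `Nin u ∩ A u ∩ B u = ∅`. -/
def BwdInferable (u : V) : Prop :=
  (G.Nin u \ G.B u).Nonempty ∧ G.Nin u ∩ (G.A u ∩ G.B u) = ∅

/-- `(u, v)` is a backward inference edge if `u` is backward inferable and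
`v ∈ Nin u \ B u`. -/
def BwdEdge (u v : V) : Prop := G.BwdInferable u ∧ v ∈ G.Nin u \ G.B u

/-- `S ⊆ E` is a valid edge-instrumentation set for vertex coverage if any
two execution traces whose edge coverage profiles agree on `S` have equal
vertex coverage profiles. -/
def ValidEdgeInstr (S : Set (V × V)) : Prop :=
  ∀ T T' : List (List V), G.IsTrace T → G.IsTrace T' →
    edgeCover T ∩ S = edgeCover T' ∩ S → cover T = cover T'

end CFG


section Helpers

variable {V : Type*}

lemma mem_of_getLast?_eq {l : List V} {c : V} (h : l.getLast? = some c) : c ∈ l := by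
  obtain ⟨hne, rfl⟩ := List.mem_getLast?_eq_getLast h
  exact List.getLast_mem hne

lemma walk_of_rtg {E : V → V → Prop} {u a b : V}
    (h : Relation.ReflTransGen (fun x y => E x y ∧ x ≠ u ∧ y ≠ u) a b) :
    ∃ w : List V, w.head? = some a ∧ w.getLast? = some b ∧ w.Chain' E ∧
      ∀ v ∈ w, v = a ∨ v ≠ u := by
  induction h using Relation.ReflTransGen.head_induction_on with
  | refl => exact ⟨[b], rfl, rfl, List.isChain_singleton b, by simp⟩
  | head hac _ ih =>
    obtain ⟨w, hw1, hw2, hw3, hw4⟩ := ih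
    rename_i a c _
    have hwne : w ≠ [] := by intro h; rw [h] at hw1; simp at hw1
    refine ⟨a :: w, rfl, ?_, ?_, ?_⟩
    · cases w with
      | nil => exact absurd rfl hwne
      | cons x xs => rw [List.getLast?_cons_cons]; exact hw2
    · refine List.isChain_cons.mpr ⟨?_, hw3⟩
      intro y hy
      rw [hw1, Option.mem_some_iff] at hy
      subst hy
      exact hac.1
    · intro v hv
      rcases List.mem_cons.mp hv with rfl | hv
      · exact Or.inl rfl
      · rcases hw4 v hv with rfl | hvu
        · exact Or.inr hac.2.2
        · exact Or.inr hvu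

lemma walk_join {E : V → V → Prop} {w1 w2 : List V} {a b c : V}
    (h1 : w1.head? = some a) (h1' : w1.getLast? = some c) (hc1 : w1.Chain' E)
    (h2 : w2.head? = some c) (h2' : w2.getLast? = some b) (hc2 : w2.Chain' E) :
    ∃ w : List V, w.head? = some a ∧ w.getLast? = some b ∧ w.Chain' E ∧
      (∀ v, v ∈ w ↔ v ∈ w1 ∨ v ∈ w2) := by
  have hw1ne : w1 ≠ [] := by intro h; rw [h] at h1; simp at h1
  have hcmem : c ∈ w1 := mem_of_getLast?_eq h1'
  obtain ⟨xs, rfl⟩ : ∃ xs, w2 = c :: xs := by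
    cases w2 with
    | nil => simp at h2
    | cons x xs => exact ⟨xs, by simpa using congrArg (List.cons · xs) (by simpa using h2)⟩
  refine ⟨w1 ++ xs, ?_, ?_, ?_, ?_⟩
  · rw [List.head?_append_of_ne_nil _ hw1ne]; exact h1
  · cases xs with
    | nil => simpa using h2'.symm ▸ (by simpa using h1')
    | cons d rest =>
      rw [List.getLast?_append_of_ne_nil _ (by simp)]
      rw [List.getLast?_cons_cons] at h2'
      exact h2'
  · refine hc1.append (List.isChain_cons.mp hc2).2 ?_
    intro x hx y hy
    rw [h1', Option.mem_some_iff] at hx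
    subst hx
    exact (List.isChain_cons.mp hc2).1 y hy
  · intro v
    rw [List.mem_append, List.mem_cons]
    constructor
    · rintro (h | h)
      · exact Or.inl h
      · exact Or.inr (Or.inr h)
    · rintro (h | rfl | h)
      · exact Or.inl h
      · exact Or.inl hcmem
      · exact Or.inr h

end Helpers

/-- If `S` is a valid instrumentation set of a control-flow graph `G`, then
every ambiguous vertex `u` of `G` belongs to `S`. -/
theorem stmt_2 {V : Type*} [Finite V] (G : CFG V) (S : Set V)
    (hS : G.ValidInstr S) (u : V) (hu : G.Ambiguous u) : u ∈ S := by
  by_contra huS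
  obtain ⟨⟨x, hxin, hxA, hxB⟩, ⟨y, hyin, hyA, hyB⟩⟩ := hu
  -- walks avoiding u
  obtain ⟨P, hP1, hP2, hP3, hP4⟩ := walk_of_rtg hxA.2
  obtain ⟨Q, hQ1, hQ2, hQ3, hQ4⟩ := walk_of_rtg hxB.2
  obtain ⟨R, hR1, hR2, hR3, hR4⟩ := walk_of_rtg hyA.2
  obtain ⟨Sy, hSy1, hSy2, hSy3, hSy4⟩ := walk_of_rtg hyB.2
  have hsu : G.s ≠ u := by
    intro h
    exact hxA.1 (by
      have : Relation.ReflTransGen (fun a b => G.E a b ∧ a ≠ u ∧ b ≠ u) G.s x := hxA.2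
      cases this.cases_head with
      | inl h' => exact (h ▸ h').symm ▸ rfl
      | inr h' => exact absurd (h ▸ (h'.choose_spec.1.2.1)) (by simp [h'.choose_spec.1.2.1]))
  have hPavoid : ∀ v ∈ P, v ≠ u := fun v hv => (hP4 v hv).elim (fun h => h ▸ hsu) id
  have hQavoid : ∀ v ∈ Q, v ≠ u := fun v hv => (hQ4 v hv).elim (fun h => h ▸ hxA.1) id
  have hRavoid : ∀ v ∈ R, v ≠ u := fun v hv => (hR4 v hv).elim (fun h => h ▸ hsu) id
  have hSyavoid : ∀ v ∈ Sy, v ≠ u := fun v hv => (hSy4 v hv).elim (fun h => h ▸ hyA.1) id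
  -- composite walks
  obtain ⟨W2a, hW2a1, hW2a2, hW2a3, hW2a4⟩ := walk_join hP1 hP2 hP3 hQ1 hQ2 hQ3
  obtain ⟨W2b, hW2b1, hW2b2, hW2b3, hW2b4⟩ := walk_join hR1 hR2 hR3 hSy1 hSy2 hSy3
  have hmid : ([x, u, y] : List V).Chain' G.E := by
    simp [List.Chain', List.isChain_cons_cons]
    exact ⟨hxin, hyin⟩
  obtain ⟨W0, hW01, hW02, hW03, hW04⟩ :=
    walk_join hP1 hP2 hP3 (show ([x, u, y] : List V).head? = some x from rfl)
      (show ([x, u, y] : List V).getLast? = some y from rfl) hmid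
  obtain ⟨W1, hW11, hW12, hW13, hW14⟩ := walk_join hW01 hW02 hW03 hSy1 hSy2 hSy3
  -- traces
  have hTr : G.IsTrace [W1, W2a, W2b] := by
    intro w hw
    simp at hw
    rcases hw with rfl | rfl | rfl
    exacts [⟨hW11, hW12, hW13⟩, ⟨hW2a1, hW2a2, hW2a3⟩, ⟨hW2b1, hW2b2, hW2b3⟩]
  have hTr' : G.IsTrace [W2a, W2b] := by
    intro w hw
    simp at hw
    rcases hw with rfl | rfl
    exacts [⟨hW2a1, hW2a2, hW2a3⟩, ⟨hW2b1, hW2b2, hW2b3⟩]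
  have huT' : u ∉ cover [W2a, W2b] := by
    rintro ⟨w, hw, hu⟩
    simp at hw
    rcases hw with rfl | rfl
    · rcases (hW2a4 u).mp hu with h | h
      · exact hPavoid u h rfl
      · exact hQavoid u h rfl
    · rcases (hW2b4 u).mp hu with h | h
      · exact hRavoid u h rfl
      · exact hSyavoid u h rfl
  have huT : u ∈ cover [W1, W2a, W2b] := ⟨W1, by simp, (hW14 u).mpr (Or.inl ((hW04 u).mpr
    (Or.inr (by simp))))⟩
  have hxP : x ∈ P := mem_of_getLast?_eq hP2
  have hySy : y ∈ Sy := List.mem_of_mem_head? (by rw [hSy1]; rfl)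
  have hcov : cover [W1, W2a, W2b] ∩ S = cover [W2a, W2b] ∩ S := by
    ext v
    simp only [Set.mem_inter_iff, cover, Set.mem_setOf_eq]
    constructor
    · rintro ⟨⟨w, hw, hv⟩, hvS⟩
      refine ⟨?_, hvS⟩
      simp at hw
      rcases hw with rfl | rfl | rfl
      · -- v ∈ W1 : v ∈ W0 ∨ v ∈ Sy ; W0: v ∈ P ∨ v ∈ [x,u,y]
        rcases (hW14 v).mp hv with hv0 | hvS'
        · rcases (hW04 v).mp hv0 with hvP | hvm
          · exact ⟨W2a, by simp, (hW2a4 v).mpr (Or.inl hvP)⟩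
          · simp at hvm
            rcases hvm with rfl | rfl | rfl
            · exact ⟨W2a, by simp, (hW2a4 v).mpr (Or.inl hxP)⟩
            · exact absurd hvS huS
            · exact ⟨W2b, by simp, (hW2b4 v).mpr (Or.inr hySy)⟩
        · exact ⟨W2b, by simp, (hW2b4 v).mpr (Or.inr hvS')⟩
      · exact ⟨w, by simp, hv⟩
      · exact ⟨w, by simp, hv⟩
    · rintro ⟨⟨w, hw, hv⟩, hvS⟩
      refine ⟨⟨w, ?_, hv⟩, hvS⟩
      simp at hw ⊢
      tauto
  have := hS (cover [W1, W2a, W2b]) ⟨_, hTr, rfl⟩ (cover [W2a, W2b]) ⟨_, hTr', rfl⟩ hcov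
  rw [this] at huT
  exact huT' huT
end

section
/- Let u be a forward inferable vertex of a control-flow graph G and let X = N^out(u) \ A(u). Then for every coverage profile C ∈ 𝒞, u ∈ C if and only if X ∩ C ≠ ∅. -/
private lemma aux_reach_avoid {V : Type*} {E : V → V → Prop} {u : V} :
    ∀ (w : List V) (a : V), List.Chain E a w → (∀ y ∈ a :: w, y ≠ u) →
      ∀ x ∈ a :: w, Relation.ReflTransGen (fun x y => E x y ∧ x ≠ u ∧ y ≠ u) a x := by
  intro w
  induction w with
  | nil =>
    intro a _ _ x hx
    simp at hx; subst hx; exact Relation.ReflTransGen.refl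
  | cons b w ih =>
    intro a hch hav x hx
    rcases List.mem_cons.1 hx with rfl | hx'
    · exact Relation.ReflTransGen.refl
    · have hreach := ih b (List.chain_cons.1 hch).2
        (fun y hy => hav y (List.mem_cons_of_mem a hy)) x hx'
      exact Relation.ReflTransGen.head
        ⟨(List.chain_cons.1 hch).1, hav a (List.mem_cons_self (a := a)),
          hav b (List.mem_cons_of_mem a (List.mem_cons_self (a := b)))⟩ hreach

private lemma aux_succ_avoid {V : Type*} {E : V → V → Prop} {u t : V} (hut : u ≠ t) :
    ∀ (w : List V) (a : V), List.Chain E a w → u ∈ a :: w →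
      (a :: w).getLast? = some t →
      ∃ v, E u v ∧ v ∈ a :: w ∧ v ≠ u ∧
        Relation.ReflTransGen (fun x y => E x y ∧ x ≠ u ∧ y ≠ u) v t := by
  intro w
  induction w with
  | nil =>
    intro a _ hmem hlast
    simp at hmem hlast
    exact absurd (hmem.trans hlast) hut
  | cons b w ih =>
    intro a hch hmem hlast
    have hch' : List.Chain E b w := (List.chain_cons.1 hch).2
    have hlast' : (b :: w).getLast? = some t := by
      rw [← hlast]; simp [List.getLast?_cons_cons]
    by_cases hub : u ∈ b :: w
    · obtain ⟨v, hv1, hv2, hv3, hv4⟩ := ih b hch' hub hlast'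
      exact ⟨v, hv1, List.mem_cons_of_mem a hv2, hv3, hv4⟩
    · have hua : u = a := by
        rcases List.mem_cons.1 hmem with h | h
        · exact h
        · exact absurd h hub
      subst hua
      have ht : t ∈ b :: w := by
        obtain ⟨ys, hys⟩ := List.getLast?_eq_some_iff.1 hlast'
        simp [hys]
      have hav : ∀ y ∈ b :: w, y ≠ u := fun y hy h => hub (h ▸ hy)
      have hreach := aux_reach_avoid (E := E) (u := u) w b hch' hav t ht
      exact ⟨b, (List.chain_cons.1 hch).1,
        List.mem_cons_of_mem u (List.mem_cons_self (a := b)),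
        hav b (List.mem_cons_self (a := b)), hreach⟩

/-- Let `u` be a forward inferable vertex and `X = Nout u \ A u`. Then for
every coverage profile `C ∈ 𝒞`, `u ∈ C` iff `X ∩ C ≠ ∅`. -/
theorem stmt_3 {V : Type*} [Finite V] (G : CFG V) (u : V)
    (hu : G.FwdInferable u) (C : Set V) (hC : C ∈ G.Profiles) :
    u ∈ C ↔ ((G.Nout u \ G.A u) ∩ C).Nonempty := by
  obtain ⟨T, hT, rfl⟩ := hC
  obtain ⟨⟨x0, hx0⟩, hdisj⟩ := hu
  have hut : u ≠ G.t := by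
    rintro rfl
    exact G.no_out_t x0 hx0.1
  constructor
  · rintro ⟨w, hwT, huw⟩
    obtain ⟨hhead, hlast, hchain⟩ := hT w hwT
    cases w with
    | nil => simp at hhead
    | cons a w' =>
      obtain ⟨v, hv1, hv2, hv3, hv4⟩ :=
        aux_succ_avoid (E := G.E) hut w' a hchain huw hlast
      refine ⟨v, ⟨⟨hv1, ?_⟩, ⟨a :: w', hwT, hv2⟩⟩⟩
      intro hvA
      have : v ∈ G.Nout u ∩ (G.A u ∩ G.B u) := ⟨hv1, hvA, hv3, hv4⟩
      rw [hdisj] at this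
      exact this
  · rintro ⟨x, ⟨hxNout, hxA⟩, ⟨w, hwT, hxw⟩⟩
    by_cases hxu : x = u
    · exact ⟨w, hwT, hxu ▸ hxw⟩
    by_cases huw : u ∈ w
    · exact ⟨w, hwT, huw⟩
    obtain ⟨hhead, hlast, hchain⟩ := hT w hwT
    cases w with
    | nil => simp at hhead
    | cons a w' =>
      have ha : a = G.s := by simpa using hhead
      have hav : ∀ y ∈ a :: w', y ≠ u := fun y hy h => huw (h ▸ hy)
      have hreach := aux_reach_avoid (E := G.E) (u := u) w' a hchain hav x hxw
      exact absurd ⟨hxu, ha ▸ hreach⟩ hxA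
end

section
/- Let u be a backward inferable vertex of a control-flow graph G and let X = N^in(u) \ B(u). Then for every coverage profile C ∈ 𝒞, u ∈ C if and only if X ∩ C ≠ ∅. -/
lemma walk_toT {V : Type*} (G : CFG V) (u : V) :
    ∀ w : List V, w.Chain' G.E → w.getLast? = some G.t →
      (∀ v ∈ w, v ≠ u) → ∀ x ∈ w,
      Relation.ReflTransGen (fun a b => G.E a b ∧ a ≠ u ∧ b ≠ u) x G.t := by
  intro w
  induction w with
  | nil => intro _ _ _ x hx; simp at hx
  | cons a rest ih =>
    intro hch hlast hne x hx
    cases rest with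
    | nil =>
      simp at hlast hx
      subst hlast; subst hx; exact Relation.ReflTransGen.refl
    | cons b rest' =>
      rw [List.Chain', List.isChain_cons_cons] at hch
      rw [List.getLast?_cons_cons] at hlast
      rcases List.mem_cons.1 hx with rfl | hx'
      · exact Relation.ReflTransGen.head
          ⟨hch.1, hne x (by simp), hne b (by simp)⟩
          (ih hch.2 hlast (fun v hv => hne v (List.mem_cons_of_mem _ hv)) b (by simp))
      · exact ih hch.2 hlast (fun v hv => hne v (List.mem_cons_of_mem _ hv)) x hx'

lemma walk_pred {V : Type*} (G : CFG V) (u : V) :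
    ∀ w : List V, w.Chain' G.E → ∀ a, w.head? = some a → a ≠ u →
      Relation.ReflTransGen (fun x y => G.E x y ∧ x ≠ u ∧ y ≠ u) G.s a →
      u ∈ w →
      ∃ x ∈ w, G.E x u ∧ x ≠ u ∧
        Relation.ReflTransGen (fun x y => G.E x y ∧ x ≠ u ∧ y ≠ u) G.s x := by
  intro w
  induction w with
  | nil => intro _ a ha _ _ hu; simp at hu
  | cons a rest ih =>
    intro hch a' ha' hane hreach hmem
    simp only [List.head?_cons, Option.some.injEq] at ha'
    subst ha'
    rcases List.mem_cons.1 hmem with rfl | hmem'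
    · exact absurd rfl hane
    · cases rest with
      | nil => simp at hmem'
      | cons b rest' =>
        rw [List.Chain', List.isChain_cons_cons] at hch
        by_cases hb : b = u
        · subst hb
          exact ⟨a, by simp, hch.1, hane, hreach⟩
        · obtain ⟨x, hxw, hxu, hxne, hxr⟩ :=
            ih hch.2 b rfl hb
              (Relation.ReflTransGen.tail hreach ⟨hch.1, hane, hb⟩) hmem'
          exact ⟨x, List.mem_cons_of_mem _ hxw, hxu, hxne, hxr⟩

/-- Let `u` be a backward inferable vertex and `X = Nin u \ B u`. Then for
every coverage profile `C ∈ 𝒞`, `u ∈ C` iff `X ∩ C ≠ ∅`. -/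
theorem stmt_4 {V : Type*} [Finite V] (G : CFG V) (u : V)
    (hu : G.BwdInferable u) (C : Set V) (hC : C ∈ G.Profiles) :
    u ∈ C ↔ ((G.Nin u \ G.B u) ∩ C).Nonempty := by
  obtain ⟨T, hT, rfl⟩ := hC
  obtain ⟨x0, hx0⟩ := hu.1
  have hus : u ≠ G.s := by
    rintro rfl
    exact G.no_in_s x0 hx0.1
  constructor
  · rintro ⟨w, hwT, huw⟩
    obtain ⟨hhead, hlast, hch⟩ := hT w hwT
    obtain ⟨x, hxw, hxu, hxne, hxr⟩ :=
      walk_pred G u w hch G.s hhead (Ne.symm hus) Relation.ReflTransGen.refl huw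
    have hxA : x ∈ G.A u := ⟨hxne, hxr⟩
    have hxB : x ∉ G.B u := by
      intro hB
      have : x ∈ G.Nin u ∩ (G.A u ∩ G.B u) := ⟨hxu, hxA, hB⟩
      rw [hu.2] at this
      exact this
    exact ⟨x, ⟨hxu, hxB⟩, ⟨w, hwT, hxw⟩⟩
  · rintro ⟨x, ⟨hxin, hxB⟩, w, hwT, hxw⟩
    by_cases hxu : x = u
    · exact ⟨w, hwT, hxu ▸ hxw⟩
    obtain ⟨hhead, hlast, hch⟩ := hT w hwT
    by_contra huC
    have hne : ∀ v ∈ w, v ≠ u := by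
      rintro v hv rfl
      exact huC ⟨w, hwT, hv⟩
    exact hxB ⟨hxu, walk_toT G u w hch hlast hne x hxw⟩
end

section
/- Let (α, φ, β) be a partition of the vertex set of a control-flow graph G such that every vertex in φ is forward inferable, every vertex in β is backward inferable, and the associated inference graph — whose edge set consists of all forward inference edges out of vertices of φ together with all backward inference edges out of vertices of β — is acyclic. Then α is a valid instrumentation set of G. -/
section AuxLemmas

variable {V : Type*}

lemma aux_chain_restrict {E : V → V → Prop} {Q : V → Prop} :
    ∀ {l : List V} {a : V}, List.Chain E a l → (∀ x ∈ a :: l, Q x) →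
      List.Chain (fun x y => E x y ∧ Q x ∧ Q y) a l := by
  intro l
  induction l with
  | nil => intro a _ _; exact List.Chain.nil
  | cons b l ih =>
    intro a h hQ
    rcases List.chain_cons.mp h with ⟨hab, h'⟩
    exact List.Chain.cons ⟨hab, hQ a (by simp), hQ b (by simp)⟩
      (ih h' (fun x hx => hQ x (List.mem_cons_of_mem _ hx)))

lemma aux_chain_rtg {r : V → V → Prop} :
    ∀ (l : List V) (a : V), List.Chain r a l →
      Relation.ReflTransGen r a ((a :: l).getLast (List.cons_ne_nil a l)) := by
  intro l
  induction l with
  | nil => intro a _; simpa using Relation.ReflTransGen.refl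
  | cons b l ih =>
    intro a h
    rcases List.chain_cons.mp h with ⟨hab, h'⟩
    have := ih b h'
    rw [List.getLast_cons (List.cons_ne_nil b l)]
    exact Relation.ReflTransGen.head hab this

/-- A chain (walk) whose vertices all avoid `u` yields a `u`-avoiding
reflexive-transitive path from its head to its last element. -/
lemma aux_seg {E : V → V → Prop} {u a b : V} {l : List V}
    (hh : l.head? = some a) (hl : l.getLast? = some b)
    (hch : l.Chain' E) (hu : ∀ x ∈ l, x ≠ u) :
    Relation.ReflTransGen (fun x y => E x y ∧ x ≠ u ∧ y ≠ u) a b := by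
  cases l with
  | nil => simp at hh
  | cons c l' =>
    have hca : c = a := by simpa using hh
    subst hca
    have hch' : List.Chain E c l' := hch
    have hb : b = (c :: l').getLast (List.cons_ne_nil c l') := by
      rw [List.getLast?_eq_getLast (List.cons_ne_nil c l')] at hl
      exact (Option.some_injective _ hl).symm
    subst hb
    exact aux_chain_rtg l' c (aux_chain_restrict hch' hu)

lemma aux_first_split {a : V} : ∀ {l : List V}, a ∈ l →
    ∃ l₁ l₂, l = l₁ ++ a :: l₂ ∧ a ∉ l₁ := by
  intro l
  induction l with
  | nil => intro h; simp at h
  | cons b l ih =>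
    intro h
    by_cases hab : a = b
    · exact ⟨[], l, by simp [hab], by simp⟩
    · have : a ∈ l := (List.mem_cons.mp h).resolve_left hab
      obtain ⟨l₁, l₂, rfl, hn⟩ := ih this
      exact ⟨b :: l₁, l₂, by simp, by simp [hab, hn]⟩

lemma aux_last_split {a : V} : ∀ {l : List V}, a ∈ l →
    ∃ l₁ l₂, l = l₁ ++ a :: l₂ ∧ a ∉ l₂ := by
  intro l
  induction l with
  | nil => intro h; simp at h
  | cons b l ih =>
    intro h
    by_cases hal : a ∈ l
    · obtain ⟨l₁, l₂, rfl, hn⟩ := ih hal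
      exact ⟨b :: l₁, l₂, by simp, hn⟩
    · have hab : a = b := (List.mem_cons.mp h).resolve_right hal
      exact ⟨[], l, by simp [hab], hal⟩

/-- Key forward-inference lemma: for a forward-inferable `u`, membership of
`u` in a coverage profile is equivalent to coverage of some forward
inference successor. -/
lemma aux_fwd_key (G : CFG V) {u : V} (hu : G.FwdInferable u)
    {T : List (List V)} (hT : G.IsTrace T) :
    u ∈ cover T ↔ ∃ v, G.FwdEdge u v ∧ v ∈ cover T := by
  constructor
  · intro hm
    obtain ⟨w, hwT, hw⟩ := hm
    obtain ⟨hh, hl, hch⟩ := hT w hwT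
    obtain ⟨w₁, w₂, rfl, hnot⟩ := aux_last_split hw
    obtain ⟨v₀, hv₀⟩ := hu.1
    have hut : u ≠ G.t := fun h => G.no_out_t v₀ (h ▸ hv₀.1)
    have hl2 : (u :: w₂).getLast (List.cons_ne_nil u w₂) = G.t := by
      rw [List.getLast?_append, List.getLast?_eq_getLast (List.cons_ne_nil u w₂)] at hl
      simpa using hl
    cases w₂ with
    | nil => exact absurd (by simpa using hl2) hut
    | cons y w₂' =>
      have hch2 : List.Chain' G.E (u :: y :: w₂') := (List.isChain_append.mp hch).2.1
      have hEuy : G.E u y := (List.isChain_cons_cons.mp hch2).1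
      have hch3 : List.Chain' G.E (y :: w₂') := (List.isChain_cons_cons.mp hch2).2
      have hlast : (y :: w₂').getLast? = some G.t := by
        rw [List.getLast?_eq_getLast (List.cons_ne_nil y w₂')]
        rw [List.getLast_cons (List.cons_ne_nil y w₂')] at hl2
        rw [hl2]
      have hyB : Relation.ReflTransGen
          (fun x y => G.E x y ∧ x ≠ u ∧ y ≠ u) y G.t :=
        aux_seg (rfl : (y :: w₂').head? = some y) hlast hch3 (fun x hx h => hnot (h ▸ hx))
      have hyne : y ≠ u := fun h => hnot (h ▸ (List.mem_cons_self : y ∈ y :: w₂'))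
      have hyBu : y ∈ G.B u := ⟨hyne, hyB⟩
      have hyA : y ∉ G.A u := fun hA =>
        Set.eq_empty_iff_forall_notMem.mp hu.2 y ⟨hEuy, hA, hyBu⟩
      exact ⟨y, ⟨hu, hEuy, hyA⟩, ⟨w₁ ++ u :: y :: w₂', hwT, by simp⟩⟩
  · rintro ⟨v, ⟨_, hvN, hvA⟩, w, hwT, hvw⟩
    obtain ⟨hh, hl, hch⟩ := hT w hwT
    by_cases hc : u ∈ w
    · exact ⟨w, hwT, hc⟩
    · exfalso
      apply hvA
      obtain ⟨w₁, w₂, rfl⟩ := List.append_of_mem hvw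
      have hch1 : List.Chain' G.E (w₁ ++ [v]) := by
        rw [show w₁ ++ v :: w₂ = (w₁ ++ [v]) ++ w₂ by simp] at hch
        exact (List.isChain_append.mp hch).1
      have hh1 : (w₁ ++ [v]).head? = some G.s := by
        cases w₁ with
        | nil => simpa using hh
        | cons a l => simpa using hh
      have hvne : v ≠ u := fun h => hc (h ▸ hvw)
      refine ⟨hvne, aux_seg hh1 List.getLast?_concat hch1 ?_⟩
      intro x hx h
      exact hc (h ▸ (by
        rcases List.mem_append.mp hx with h' | h'
        · exact List.mem_append.mpr (Or.inl h')
        · simp at h'; subst h'; exact hvw))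

/-- Key backward-inference lemma. -/
lemma aux_bwd_key (G : CFG V) {u : V} (hu : G.BwdInferable u)
    {T : List (List V)} (hT : G.IsTrace T) :
    u ∈ cover T ↔ ∃ v, G.BwdEdge u v ∧ v ∈ cover T := by
  constructor
  · intro hm
    obtain ⟨w, hwT, hw⟩ := hm
    obtain ⟨hh, hl, hch⟩ := hT w hwT
    obtain ⟨w₁, w₂, rfl, hnot⟩ := aux_first_split hw
    obtain ⟨v₀, hv₀⟩ := hu.1
    have hus : u ≠ G.s := fun h => G.no_in_s v₀ (h ▸ hv₀.1)
    cases w₁ with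
    | nil =>
      exact absurd (by simpa using hh : u = G.s) hus
    | cons a l =>
      have hhead : ((a :: l) : List V).head? = some G.s := by
        simpa using hh
      have happ := List.isChain_append.mp hch
      have hx := happ.2.2
      set x := (a :: l).getLast (List.cons_ne_nil a l) with hxdef
      have hxlast : ((a :: l) : List V).getLast? = some x :=
        List.getLast?_eq_getLast (List.cons_ne_nil a l)
      have hExu : G.E x u := hx x hxlast u rfl
      have hxA : Relation.ReflTransGen
          (fun p q => G.E p q ∧ p ≠ u ∧ q ≠ u) G.s x :=
        aux_seg hhead hxlast happ.1 (fun z hz h => hnot (h ▸ hz))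
      have hxmem : x ∈ (a :: l) := List.getLast_mem _
      have hxne : x ≠ u := fun h => hnot (h ▸ hxmem)
      have hxAu : x ∈ G.A u := ⟨hxne, hxA⟩
      have hxB : x ∉ G.B u := fun hB =>
        Set.eq_empty_iff_forall_notMem.mp hu.2 x ⟨hExu, hxAu, hB⟩
      exact ⟨x, ⟨hu, hExu, hxB⟩,
        ⟨(a :: l) ++ u :: w₂, hwT, List.mem_append.mpr (Or.inl hxmem)⟩⟩
  · rintro ⟨v, ⟨_, hvN, hvB⟩, w, hwT, hvw⟩
    obtain ⟨hh, hl, hch⟩ := hT w hwT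
    by_cases hc : u ∈ w
    · exact ⟨w, hwT, hc⟩
    · exfalso
      apply hvB
      obtain ⟨w₁, w₂, rfl⟩ := List.append_of_mem hvw
      have hch1 : List.Chain' G.E (v :: w₂) := (List.isChain_append.mp hch).2.1
      have hl1 : ((v :: w₂) : List V).getLast? = some G.t := by
        rw [List.getLast?_append, List.getLast?_eq_getLast (List.cons_ne_nil v w₂)] at hl
        rw [List.getLast?_eq_getLast (List.cons_ne_nil v w₂)]
        simpa using hl
      have hvne : v ≠ u := fun h => hc (h ▸ hvw)
      refine ⟨hvne, aux_seg (rfl : (v :: w₂).head? = some v) hl1 hch1 ?_⟩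
      intro x hx h
      exact hc (h ▸ List.mem_append.mpr (Or.inr hx))

end AuxLemmas

/-- If `(α, φ, β)` is a partition of `V` with every vertex of `φ` forward
inferable, every vertex of `β` backward inferable, and the associated
inference graph (forward inference edges out of `φ` together with backward
inference edges out of `β`) acyclic, then `α` is a valid instrumentation set. -/
theorem stmt_5 {V : Type*} [Finite V] (G : CFG V) (α φ β : Set V)
    (hαφ : Disjoint α φ) (hαβ : Disjoint α β) (hφβ : Disjoint φ β)
    (hcover : α ∪ φ ∪ β = Set.univ)
    (hφ : ∀ u ∈ φ, G.FwdInferable u)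
    (hβ : ∀ u ∈ β, G.BwdInferable u)
    (hacyc : ∀ v : V, ¬ Relation.TransGen
      (fun x y => (x ∈ φ ∧ G.FwdEdge x y) ∨ (x ∈ β ∧ G.BwdEdge x y)) v v) :
    G.ValidInstr α := by
  set R : V → V → Prop := fun x y =>
    (x ∈ φ ∧ G.FwdEdge x y) ∨ (x ∈ β ∧ G.BwdEdge x y) with hR
  have hwf : WellFounded (Function.swap R) := by
    have hirr : IsIrrefl V (Relation.TransGen (Function.swap R)) :=
      ⟨fun a h => hacyc a (Relation.transGen_swap.mp h)⟩
    have h1 : WellFounded (Relation.TransGen (Function.swap R)) :=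
      Finite.wellFounded_of_trans_of_irrefl _
    exact Subrelation.wf (fun h => Relation.TransGen.single h) h1
  rintro C ⟨T, hT, rfl⟩ C' ⟨T', hT', rfl⟩ hagree
  have key : ∀ u, u ∈ cover T ↔ u ∈ cover T' := by
    intro u
    induction u using hwf.induction with
    | _ u IH =>
    have hmem : u ∈ α ∨ u ∈ φ ∨ u ∈ β := by
      have := Set.eq_univ_iff_forall.mp hcover u
      rcases this with (h | h) | h
      · exact Or.inl h
      · exact Or.inr (Or.inl h)
      · exact Or.inr (Or.inr h)
    rcases hmem with h | h | h
    · have := Set.ext_iff.mp hagree u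
      simp only [Set.mem_inter_iff] at this
      constructor
      · intro hm; exact (this.mp ⟨hm, h⟩).1
      · intro hm; exact (this.mpr ⟨hm, h⟩).1
    · rw [aux_fwd_key G (hφ u h) hT, aux_fwd_key G (hφ u h) hT']
      exact exists_congr fun v => and_congr_right fun he => IH v (Or.inl ⟨h, he⟩)
    · rw [aux_bwd_key G (hβ u h) hT, aux_bwd_key G (hβ u h) hT']
      exact exists_congr fun v => and_congr_right fun he => IH v (Or.inr ⟨h, he⟩)
  exact Set.ext key
end

section
/- Let H be the directed graph on the vertex set of a control-flow graph G whose edge set is the union of the forward inference edges and the backward inference edges. Then every simple directed cycle of H has at most two vertices: if v_1, …, v_k are distinct vertices such that each pair (v_i, v_{i+1}) and the pair (v_k, v_1) are edges of H, then k ≤ 2. -/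
namespace CFG
variable {V : Type*} (G : CFG V)

def Res (u : V) : V → V → Prop := fun x y => G.E x y ∧ x ≠ u ∧ y ≠ u

lemma mem_A_iff {u v : V} : v ∈ G.A u ↔ v ≠ u ∧ Relation.ReflTransGen (G.Res u) G.s v := Iff.rfl
lemma mem_B_iff {u v : V} : v ∈ G.B u ↔ v ≠ u ∧ Relation.ReflTransGen (G.Res u) v G.t := Iff.rfl

lemma A_tail {u x y : V} (hx : x ∈ G.A u) (e : G.E x y) (hy : y ≠ u) : y ∈ G.A u :=
  ⟨hy, hx.2.tail ⟨e, hx.1, hy⟩⟩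

lemma B_head {u x y : V} (hy : y ∈ G.B u) (e : G.E x y) (hx : x ≠ u) : x ∈ G.B u :=
  ⟨hx, hy.2.head ⟨e, hx, hy.1⟩⟩

lemma domZ {z x y : V} (h : y ∉ G.A z) (e : G.E x y) (hyz : y ≠ z) : x ∉ G.A z :=
  fun hx => h (G.A_tail hx e hyz)

lemma pdZ {z x y : V} (h : x ∉ G.B z) (e : G.E x y) (hxz : x ≠ z) : y ∉ G.B z :=
  fun hy => h (G.B_head hy e hxz)

lemma pathA {u m : V} (hmu : m ≠ u) (hm : m ∉ G.A u) :
    ∀ {w : V}, Relation.ReflTransGen (G.Res u) G.s w → w ∈ G.A m ∨ w = m := by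
  intro w h
  induction h with
  | refl =>
    by_cases hs : G.s = m
    · exact Or.inr hs
    · exact Or.inl ⟨hs, Relation.ReflTransGen.refl⟩
  | tail hpath hstep ih =>
    rename_i x w
    rcases ih with hx | rfl
    · by_cases hw : w = m
      · exact Or.inr hw
      · exact Or.inl (G.A_tail hx hstep.1 hw)
    · exact absurd ⟨hmu, hpath⟩ hm

lemma domT {u m w : V} (h1 : m ∉ G.A u) (h2 : w ∉ G.A m) : w ∉ G.A u := by
  by_cases hmu : m = u
  · subst hmu; exact h2
  · intro hw
    rcases G.pathA hmu h1 hw.2 with h | rfl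
    · exact h2 h
    · exact h1 hw

lemma pathB {u m : V} (hmu : m ≠ u) (hm : m ∉ G.B u) :
    ∀ {w : V}, Relation.ReflTransGen (G.Res u) w G.t → w ∈ G.B m ∨ w = m := by
  intro w h
  induction h using Relation.ReflTransGen.head_induction_on with
  | refl =>
    by_cases ht : G.t = m
    · exact Or.inr ht
    · exact Or.inl ⟨ht, Relation.ReflTransGen.refl⟩
  | head hstep hpath ih =>
    rename_i w x
    rcases ih with hx | rfl
    · by_cases hw : w = m
      · exact Or.inr hw
      · exact Or.inl (G.B_head hx hstep.1 hw)
    · exact absurd ⟨hmu, hpath⟩ hm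

lemma pdT {u m w : V} (h1 : m ∉ G.B u) (h2 : w ∉ G.B m) : w ∉ G.B u := by
  by_cases hmu : m = u
  · subst hmu; exact h2
  · intro hw
    rcases G.pathB hmu h1 hw.2 with h | rfl
    · exact h2 h
    · exact h1 hw

lemma chain_avoid (u : V) : ∀ (x : V) (lp : List V), List.Chain G.E x lp → u ∉ (x :: lp) →
    Relation.ReflTransGen (G.Res u) x ((x :: lp).getLast (by simp)) := by
  intro x lp
  induction lp generalizing x with
  | nil => intro _ _; simpa using Relation.ReflTransGen.refl
  | cons p lt ih =>
    intro hch hu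
    rcases List.chain_cons.mp hch with ⟨e, hch'⟩
    have hx : x ≠ u := fun h => hu (h ▸ List.mem_cons_self)
    have hp : p ≠ u := fun h => hu (h ▸ List.mem_cons_of_mem _ (List.mem_cons_self))
    have hu' : u ∉ p :: lt := fun h => hu (List.mem_cons_of_mem _ h)
    have := ih p hch' hu'
    rw [List.getLast_cons (by simp)]
    exact Relation.ReflTransGen.head ⟨e, hx, hp⟩ this

lemma antisymA_aux : ∀ (n : ℕ) (lp : List V) (u v : V), lp.length ≤ n →
    List.Chain G.E G.s lp → ((G.s :: lp).getLast (by simp)) = v → u ≠ v →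
    u ∈ G.A v ∨ v ∈ G.A u := by
  intro n
  induction n with
  | zero =>
    intro lp u v hlen hch hlast hne
    obtain rfl : lp = [] := List.length_eq_zero_iff.mp (Nat.le_zero.mp hlen)
    have hv : G.s = v := by simpa using hlast
    exact Or.inr ⟨hne.symm, hv ▸ Relation.ReflTransGen.refl⟩
  | succ n ih =>
    intro lp u v hlen hch hlast hne
    by_cases hus : u = G.s
    · exact Or.inl ⟨hne, hus ▸ Relation.ReflTransGen.refl⟩
    by_cases hu : u ∈ lp
    · obtain ⟨l1, l2, rfl⟩ := List.append_of_mem hu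
      have hgl : ((G.s :: (l1 ++ [u])).getLast (by simp)) = u :=
        List.getLast_append_singleton (G.s :: l1)
      have hl2 : l2 ≠ [] := by
        rintro rfl
        exact hne (hgl.symm.trans hlast)
      have hch1 : List.Chain G.E G.s (l1 ++ [u]) := (List.isChain_cons_split.mp hch).1
      have hlen1 : (l1 ++ [u]).length ≤ n := by
        have h2 : l2.length ≥ 1 := List.length_pos_iff.mpr hl2
        simp only [List.length_append, List.length_cons, List.length_nil] at hlen ⊢
        omega
      exact (ih (l1 ++ [u]) v u hlen1 hch1 hgl hne.symm).symm
    · refine Or.inr ⟨hne.symm, ?_⟩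
      have hmem : u ∉ G.s :: lp := by
        intro hmem
        rcases List.mem_cons.mp hmem with h | h
        exacts [hus h, hu h]
      have h := G.chain_avoid u G.s lp hch hmem
      exact hlast ▸ h

lemma antisymA {u v : V} (hne : u ≠ v) : u ∈ G.A v ∨ v ∈ G.A u := by
  obtain ⟨lp, hch, hlast⟩ := List.exists_isChain_cons_of_relationReflTransGen (G.reach_from_s v)
  exact G.antisymA_aux lp.length lp u v le_rfl hch hlast hne

lemma antisymB_aux : ∀ (n : ℕ) (lp : List V) (u v : V), lp.length ≤ n →
    List.Chain G.E v lp → ((v :: lp).getLast (by simp)) = G.t → u ≠ v →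
    u ∈ G.B v ∨ v ∈ G.B u := by
  intro n
  induction n with
  | zero =>
    intro lp u v hlen hch hlast hne
    obtain rfl : lp = [] := List.length_eq_zero_iff.mp (Nat.le_zero.mp hlen)
    have hv : v = G.t := by simpa using hlast
    exact Or.inr ⟨hne.symm, hv ▸ Relation.ReflTransGen.refl⟩
  | succ n ih =>
    intro lp u v hlen hch hlast hne
    by_cases hut : u = G.t
    · exact Or.inl ⟨hne, hut ▸ Relation.ReflTransGen.refl⟩
    by_cases hu : u ∈ lp
    · obtain ⟨l1, l2, rfl⟩ := List.append_of_mem hu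
      by_cases hl2 : l2 = []
      · subst hl2
        have hgl : ((v :: (l1 ++ [u])).getLast (by simp)) = u :=
          List.getLast_append_singleton (v :: l1)
        exact absurd (hgl.symm.trans hlast) hut
      · have hch2 : List.Chain G.E u l2 := (List.isChain_cons_split.mp hch).2
        have hgl : ((v :: (l1 ++ u :: l2)).getLast (by simp)) = ((u :: l2).getLast (by simp)) :=
          List.getLast_append_of_ne_nil (l := v :: l1) _ (List.cons_ne_nil _ _)
        have hlast2 : ((u :: l2).getLast (by simp)) = G.t := hgl.symm.trans hlast
        have hlen2 : l2.length ≤ n := by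
          simp only [List.length_append, List.length_cons] at hlen
          omega
        exact (ih l2 v u hlen2 hch2 hlast2 hne.symm).symm
    · refine Or.inr ⟨hne.symm, ?_⟩
      have hmem : u ∉ v :: lp := by
        intro hmem
        rcases List.mem_cons.mp hmem with h | h
        exacts [hne h, hu h]
      have h := G.chain_avoid u v lp hch hmem
      exact hlast ▸ h

lemma antisymB {u v : V} (hne : u ≠ v) : u ∈ G.B v ∨ v ∈ G.B u := by
  obtain ⟨lp, hch, hlast⟩ := List.exists_isChain_cons_of_relationReflTransGen (G.reach_to_t v)
  exact G.antisymB_aux lp.length lp u v le_rfl hch hlast hne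

lemma noAA {u v : V} (hne : u ≠ v) (h1 : v ∉ G.A u) (h2 : u ∉ G.A v) : False :=
  (G.antisymA hne).elim h2 h1

lemma noBB {u v : V} (hne : u ≠ v) (h1 : v ∉ G.B u) (h2 : u ∉ G.B v) : False :=
  (G.antisymB hne).elim h2 h1

lemma fwd_dom {u v : V} (h : G.FwdEdge u v) : v ∉ G.A u := h.2.2
lemma fwd_E {u v : V} (h : G.FwdEdge u v) : G.E u v := h.2.1
lemma bwd_pd {u v : V} (h : G.BwdEdge u v) : v ∉ G.B u := h.2.2
lemma bwd_E {u v : V} (h : G.BwdEdge u v) : G.E v u := h.2.1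

lemma PF : ∀ (m : List V) (x y z : V),
    List.Chain (fun p q => G.FwdEdge p q ∨ G.BwdEdge p q) x (m ++ [y]) →
    x ∉ G.A z → z ∉ x :: m → y ∉ G.A z := by
  intro m
  induction m with
  | nil =>
    intro x y z hch hx hz
    have hxz : x ≠ z := fun h => hz (by simp [h])
    rcases (List.chain_cons.mp hch).1 with hF | hB
    · exact G.domT hx (G.fwd_dom hF)
    · exact G.domZ hx (G.bwd_E hB) hxz
  | cons p m' ih =>
    intro x y z hch hx hz
    rw [List.cons_append] at hch
    obtain ⟨he, hch'⟩ := List.chain_cons.mp hch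
    have hxz : x ≠ z := fun h => hz (by simp [h])
    have hp : p ∉ G.A z := by
      rcases he with hF | hB
      · exact G.domT hx (G.fwd_dom hF)
      · exact G.domZ hx (G.bwd_E hB) hxz
    exact ih p y z hch' hp (fun h => hz (List.mem_cons_of_mem _ h))

lemma PP : ∀ (m : List V) (x y z : V),
    List.Chain (fun p q => G.FwdEdge p q ∨ G.BwdEdge p q) x (m ++ [y]) →
    x ∉ G.B z → z ∉ x :: m → y ∉ G.B z := by
  intro m
  induction m with
  | nil =>
    intro x y z hch hx hz
    have hxz : x ≠ z := fun h => hz (by simp [h])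
    rcases (List.chain_cons.mp hch).1 with hF | hB
    · exact G.pdZ hx (G.fwd_E hF) hxz
    · exact G.pdT hx (G.bwd_pd hB)
  | cons p m' ih =>
    intro x y z hch hx hz
    rw [List.cons_append] at hch
    obtain ⟨he, hch'⟩ := List.chain_cons.mp hch
    have hxz : x ≠ z := fun h => hz (by simp [h])
    have hp : p ∉ G.B z := by
      rcases he with hF | hB
      · exact G.pdZ hx (G.fwd_E hF) hxz
      · exact G.pdT hx (G.bwd_pd hB)
    exact ih p y z hch' hp (fun h => hz (List.mem_cons_of_mem _ h))

lemma chain_snoc {H : V → V → Prop} {x y w : V} {m : List V}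
    (h : List.Chain H x (m ++ [y])) (hyw : H y w) :
    List.Chain H x ((m ++ [y]) ++ [w]) := by
  have := (List.isChain_cons_split (R := H) (a := x) (l₁ := m) (c := y) (l₂ := [w])).mpr ⟨h, List.isChain_pair.mpr hyw⟩
  rw [List.append_assoc]; exact this


end CFG

/-- In the union of the forward and backward inference graphs, every simple
directed cycle has at most two vertices. -/
theorem stmt_8 {V : Type*} [Finite V] (G : CFG V) (a : V) (l : List V)
    (hnd : (a :: l).Nodup)
    (hc : List.Chain (fun x y => G.FwdEdge x y ∨ G.BwdEdge x y) a (l ++ [a])) :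
    (a :: l).length ≤ 2 := by
  by_contra hlen
  push_neg at hlen
  obtain ⟨b, c, l'', rfl⟩ : ∃ b c l'', l = b :: c :: l'' := by
    match l, hlen with
    | [], h => simp at h
    | [x], h => simp at h
    | x :: y :: r, _ => exact ⟨x, y, r, rfl⟩
  simp only [List.nodup_cons, List.mem_cons, not_or] at hnd
  obtain ⟨⟨hab, hac, hal⟩, ⟨hbc, hbl⟩, hcl, -⟩ := hnd
  have hca' : c ≠ a := fun h => hac h.symm
  rw [List.cons_append, List.cons_append] at hc
  obtain ⟨h1, hc⟩ := List.chain_cons.mp hc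
  obtain ⟨h2, hc⟩ := List.chain_cons.mp hc
  -- hc : Chain H c (l'' ++ [a])
  rcases h1 with hF1 | hB1 <;> rcases h2 with hF2 | hB2
  · -- F, F : propagate Dom b from c around to a
    have hba : a ∉ G.A b := G.PF l'' c a b hc (G.fwd_dom hF2)
      (by simp only [List.mem_cons, not_or]; exact ⟨hbc, hbl⟩)
    exact G.noAA hab (G.fwd_dom hF1) hba
  · -- F, B : look at third edge
    have hca : c ∉ G.A a := G.PF [] b c a
      (List.isChain_pair.mpr (Or.inr hB2)) (G.fwd_dom hF1)
      (by simp only [List.nil_append, List.mem_singleton]; exact hab)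
    match l'', hc, hcl with
    | [], hc, hcl =>
      rcases List.isChain_pair.mp hc with hF3 | hB3
      · exact G.noAA hac hca (G.fwd_dom hF3)
      · have hbc' : b ∉ G.B c := G.PP [] a b c
          (List.isChain_pair.mpr (Or.inl hF1)) (G.bwd_pd hB3)
          (by simp only [List.nil_append, List.mem_singleton]; exact hca')
        exact G.noBB hbc (G.bwd_pd hB2) hbc'
    | e :: l3, hc, hcl =>
      rw [List.cons_append] at hc
      obtain ⟨h3, hc'⟩ := List.chain_cons.mp hc
      have hcl' : ¬c = e ∧ c ∉ l3 := by simpa using hcl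
      rcases h3 with hF3 | hB3
      · have : a ∉ G.A c := G.PF l3 e a c hc' (G.fwd_dom hF3) hcl
        exact G.noAA hac hca this
      · have hch2 := CFG.chain_snoc hc' (Or.inl hF1)
        have hbc' : b ∉ G.B c := G.PP (l3 ++ [a]) e b c hch2 (G.bwd_pd hB3)
          (by simp only [List.mem_cons, List.mem_append, List.mem_singleton, not_or]
              exact ⟨hcl'.1, hcl'.2, hca', List.not_mem_nil⟩)
        exact G.noBB hbc (G.bwd_pd hB2) hbc'
  · -- B, F : look at third edge
    have hca : c ∉ G.B a := G.PP [] b c a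
      (List.isChain_pair.mpr (Or.inl hF2)) (G.bwd_pd hB1)
      (by simp only [List.nil_append, List.mem_singleton]; exact hab)
    match l'', hc, hcl with
    | [], hc, hcl =>
      rcases List.isChain_pair.mp hc with hF3 | hB3
      · have hbc' : b ∉ G.A c := G.PF [] a b c
          (List.isChain_pair.mpr (Or.inr hB1)) (G.fwd_dom hF3)
          (by simp only [List.nil_append, List.mem_singleton]; exact hca')
        exact G.noAA hbc (G.fwd_dom hF2) hbc'
      · exact G.noBB hac hca (G.bwd_pd hB3)
    | e :: l3, hc, hcl =>
      rw [List.cons_append] at hc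
      obtain ⟨h3, hc'⟩ := List.chain_cons.mp hc
      have hcl' : ¬c = e ∧ c ∉ l3 := by simpa using hcl
      rcases h3 with hF3 | hB3
      · have hch2 := CFG.chain_snoc hc' (Or.inr hB1)
        have hbc' : b ∉ G.A c := G.PF (l3 ++ [a]) e b c hch2 (G.fwd_dom hF3)
          (by simp only [List.mem_cons, List.mem_append, List.mem_singleton, not_or]
              exact ⟨hcl'.1, hcl'.2, hca', List.not_mem_nil⟩)
        exact G.noAA hbc (G.fwd_dom hF2) hbc'
      · have : a ∉ G.B c := G.PP l3 e a c hc' (G.bwd_pd hB3) hcl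
        exact G.noBB hac hca this
  · -- B, B : propagate Pd b from c around to a
    have hba : a ∉ G.B b := G.PP l'' c a b hc (G.bwd_pd hB2)
      (by simp only [List.mem_cons, not_or]; exact ⟨hbc, hbl⟩)
    exact G.noBB hab (G.bwd_pd hB1) hba
end

section
/- Let v_1, …, v_k (k ≥ 1) be distinct vertices of a control-flow graph G such that (v_i, v_{i+1}) is a forward inference edge and (v_{i+1}, v_i) is a backward inference edge for all 1 ≤ i < k. Suppose there exist an in-neighbor x of v_1 with x ∈ A(v_1) ∩ B(v_1) and an out-neighbor y of v_k with y ∈ A(v_k) ∩ B(v_k). Then every valid instrumentation set S of G contains at least one of the vertices v_1, …, v_k. -/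
namespace StmtAux
open List

theorem chainAppend {α : Type*} {R : α → α → Prop} :
    ∀ (l₁ : List α) (a b : α) (l₂ : List α), Chain R a l₁ →
      (a :: l₁).getLast (cons_ne_nil _ _) = b → Chain R b l₂ →
      Chain R a (l₁ ++ l₂) ∧
        (a :: (l₁ ++ l₂)).getLast (cons_ne_nil _ _) = (b :: l₂).getLast (cons_ne_nil _ _)
  | [], a, b, l₂, _, hlast, h₂ => by
      simp only [getLast_singleton] at hlast
      subst hlast
      exact ⟨h₂, rfl⟩
  | c :: l₁, a, b, l₂, h₁, hlast, h₂ => by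
      rw [Chain, chain_cons] at h₁
      rw [getLast_cons_cons] at hlast
      obtain ⟨hc, hl⟩ := chainAppend l₁ c b l₂ h₁.2 hlast h₂
      exact ⟨chain_cons.mpr ⟨h₁.1, hc⟩, by rw [cons_append, getLast_cons_cons]; exact hl⟩

theorem avoid_mem_ne {α : Type*} {R : α → α → Prop} {u : α} :
    ∀ {l : List α} {a : α}, Chain (fun x y => R x y ∧ x ≠ u ∧ y ≠ u) a l →
      ∀ b ∈ l, b ≠ u
  | [], _, _, b, hb => absurd hb not_mem_nil
  | c :: l, a, h, b, hb => by
      rw [Chain, chain_cons] at h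
      rcases mem_cons.mp hb with rfl | hb
      · exact h.1.2.2
      · exact avoid_mem_ne h.2 b hb

theorem chain_avoid {α : Type*} {R : α → α → Prop} {u : α} :
    ∀ {l : List α} {a : α}, Chain R a l → (∀ b ∈ a :: l, b ≠ u) →
      Chain (fun x y => R x y ∧ x ≠ u ∧ y ≠ u) a l
  | [], _, _, _ => Chain.nil
  | c :: l, a, h, hne => by
      rw [Chain, chain_cons] at h ⊢
      exact ⟨⟨h.1, hne a (mem_cons_self), hne c (mem_cons_of_mem _ (mem_cons_self))⟩,
        chain_avoid h.2 fun b hb => hne b (mem_cons_of_mem _ hb)⟩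

theorem chain_seq {α : Type*} {R : α → α → Prop} :
    ∀ (n : ℕ) (u : ℕ → α), (∀ m, m + 1 ≤ n → R (u m) (u (m + 1))) →
      Chain R (u 0) ((range n).map fun i => u (i + 1)) ∧
        ((u 0 :: (range n).map fun i => u (i + 1)).getLast (cons_ne_nil _ _)) = u n
  | 0, u, _ => ⟨Chain.nil, rfl⟩
  | n + 1, u, h => by
      obtain ⟨ih1, ih2⟩ := chain_seq n (fun i => u (i + 1)) (fun m hm => h (m + 1) (by omega))
      rw [range_succ_eq_map, map_cons, map_map]
      refine ⟨chain_cons.mpr ⟨h 0 (by omega), ?_⟩, ?_⟩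
      · exact ih1
      · rw [getLast_cons_cons]
        exact ih2

end StmtAux

/-- Let `v 0, …, v (k-1)` (`k ≥ 1`) be distinct vertices such that each
`(v i, v (i+1))` is a forward inference edge and each `(v (i+1), v i)` is a
backward inference edge. If the first vertex has an in-neighbor in
`A(v 0) ∩ B(v 0)` and the last vertex has an out-neighbor in
`A(v (k-1)) ∩ B(v (k-1))`, then every valid instrumentation set contains at
least one of the vertices `v i`. -/
theorem stmt_11 {V : Type*} [Finite V] (G : CFG V) (k : ℕ) (hk : 1 ≤ k)
    (v : Fin k → V) (hinj : Function.Injective v)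
    (hfwd : ∀ i : ℕ, ∀ h : i + 1 < k, G.FwdEdge (v ⟨i, by omega⟩) (v ⟨i + 1, h⟩))
    (hbwd : ∀ i : ℕ, ∀ h : i + 1 < k, G.BwdEdge (v ⟨i + 1, h⟩) (v ⟨i, by omega⟩))
    (x : V) (hx1 : x ∈ G.Nin (v ⟨0, by omega⟩))
    (hx2 : x ∈ G.A (v ⟨0, by omega⟩) ∩ G.B (v ⟨0, by omega⟩))
    (y : V) (hy1 : y ∈ G.Nout (v ⟨k - 1, by omega⟩))
    (hy2 : y ∈ G.A (v ⟨k - 1, by omega⟩) ∩ G.B (v ⟨k - 1, by omega⟩))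
    (S : Set V) (hS : G.ValidInstr S) :
    ∃ i : Fin k, v i ∈ S := by
  classical
  by_contra hcon
  push_neg at hcon
  have hk0 : 0 < k := hk
  have hk1 : k - 1 < k := by omega
  set v0 : V := v ⟨0, hk0⟩ with hv0def
  set vl : V := v ⟨k - 1, hk1⟩ with hvldef
  -- extract the four avoiding chains
  obtain ⟨hxne, hxA⟩ := hx2.1
  obtain ⟨-, hxB⟩ := hx2.2
  obtain ⟨hyne, hyA⟩ := hy2.1
  obtain ⟨-, hyB⟩ := hy2.2
  obtain ⟨l1, hl1c, hl1l⟩ := List.exists_isChain_cons_of_relationReflTransGen hxA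
  obtain ⟨l2, hl2c, hl2l⟩ := List.exists_isChain_cons_of_relationReflTransGen hxB
  obtain ⟨m1, hm1c, hm1l⟩ := List.exists_isChain_cons_of_relationReflTransGen hyA
  obtain ⟨m2, hm2c, hm2l⟩ := List.exists_isChain_cons_of_relationReflTransGen hyB
  -- the chain vertices as a list
  set u : ℕ → V := fun n => if h : n < k then v ⟨n, h⟩ else v ⟨0, hk0⟩ with hudef
  have hu : ∀ n (h : n < k), u n = v ⟨n, h⟩ := fun n h => dif_pos h
  set c : List V := u 0 :: (List.range (k - 1)).map (fun i => u (i + 1)) with hcdef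
  have hEc : ∀ m, m + 1 ≤ k - 1 → G.E (u m) (u (m + 1)) := by
    intro m hm
    have h' : m + 1 < k := by omega
    rw [hu m (by omega), hu (m + 1) h']
    exact (hfwd m h').2.1
  obtain ⟨hcc, hcl⟩ := StmtAux.chain_seq (k - 1) u hEc
  have hu0 : u 0 = v0 := hu 0 hk0
  have hul : u (k - 1) = vl := hu (k - 1) hk1
  -- walks
  set W1 : List V := G.s :: (l1 ++ (c ++ y :: m2)) with hW1def
  set W2 : List V := G.s :: (l1 ++ l2) with hW2def
  set W3 : List V := G.s :: (m1 ++ m2) with hW3def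
  -- W2 chain (avoiding v0)
  obtain ⟨hW2c, hW2l⟩ := StmtAux.chainAppend l1 G.s x l2 hl1c hl1l hl2c
  have hW2last : W2.getLast (List.cons_ne_nil _ _) = G.t := hW2l.trans hl2l
  -- W3 chain (avoiding vl)
  obtain ⟨hW3c, hW3l⟩ := StmtAux.chainAppend m1 G.s y m2 hm1c hm1l hm2c
  have hW3last : W3.getLast (List.cons_ne_nil _ _) = G.t := hW3l.trans hm2l
  -- W1 chain
  have hxc : List.Chain G.E x c := List.chain_cons.mpr ⟨hu0 ▸ hx1, hcc⟩
  have hxcl : (x :: c).getLast (List.cons_ne_nil _ _) = u (k - 1) := by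
    rw [hcdef, List.getLast_cons_cons]; exact hcl
  have hym2 : List.Chain G.E (u (k - 1)) (y :: m2) := by
    rw [hul]
    exact List.chain_cons.mpr ⟨hy1, hm2c.imp fun _ _ h => h.1⟩
  obtain ⟨hd, hdl⟩ := StmtAux.chainAppend c x (u (k - 1)) (y :: m2) hxc hxcl hym2
  obtain ⟨hW1c, hW1l⟩ := StmtAux.chainAppend l1 G.s x (c ++ y :: m2)
    (hl1c.imp fun _ _ h => h.1) hl1l hd
  have hW1last : W1.getLast (List.cons_ne_nil _ _) = G.t := by
    rw [hW1l, hdl, List.getLast_cons_cons]; exact hm2l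
  -- the walks are walks
  have hwalk1 : G.IsWalk W1 := by
    refine ⟨rfl, ?_, hW1c⟩
    rw [List.getLast?_eq_getLast_of_ne_nil (List.cons_ne_nil _ _), hW1last]
  have hwalk2 : G.IsWalk W2 := by
    refine ⟨rfl, ?_, List.IsChain.imp (fun _ _ h => h.1) hW2c⟩
    rw [List.getLast?_eq_getLast_of_ne_nil (List.cons_ne_nil _ _), hW2last]
  have hwalk3 : G.IsWalk W3 := by
    refine ⟨rfl, ?_, List.IsChain.imp (fun _ _ h => h.1) hW3c⟩
    rw [List.getLast?_eq_getLast_of_ne_nil (List.cons_ne_nil _ _), hW3last]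
  set T : List (List V) := [W2, W3, W1] with hTdef
  set T' : List (List V) := [W2, W3] with hT'def
  have hTr : G.IsTrace T := by
    intro w hw
    simp only [hTdef, List.mem_cons, List.not_mem_nil, or_false] at hw
    rcases hw with rfl | rfl | rfl
    · exact hwalk2
    · exact hwalk3
    · exact hwalk1
  have hTr' : G.IsTrace T' := by
    intro w hw
    simp only [hT'def, List.mem_cons, List.not_mem_nil, or_false] at hw
    rcases hw with rfl | rfl
    · exact hwalk2
    · exact hwalk3
  -- elements of c are chain vertices
  have hc_mem : ∀ b ∈ c, ∃ i : Fin k, b = v i := by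
    intro b hb
    rw [hcdef, List.mem_cons] at hb
    rcases hb with rfl | hb
    · exact ⟨⟨0, hk0⟩, (hu 0 hk0)⟩
    · obtain ⟨i, hi, rfl⟩ := List.mem_map.mp hb
      rw [List.mem_range] at hi
      exact ⟨⟨i + 1, by omega⟩, hu (i + 1) (by omega)⟩
  -- y is in W3
  have hyW3 : y ∈ W3 := by
    have := List.getLast_mem (l := G.s :: m1) (List.cons_ne_nil _ _)
    rw [hm1l] at this
    rcases List.mem_cons.mp this with rfl | h
    · exact List.mem_cons_self
    · exact List.mem_cons_of_mem _ (List.mem_append_left _ h)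
  -- coverage profiles agree on S
  have hcovS : cover T ∩ S = cover T' ∩ S := by
    ext z
    simp only [Set.mem_inter_iff, cover, Set.mem_setOf_eq, hTdef, hT'def, List.mem_cons,
      List.not_mem_nil, or_false]
    constructor
    · rintro ⟨⟨w, hw, hz⟩, hzS⟩
      refine ⟨?_, hzS⟩
      rcases hw with rfl | rfl | rfl
      · exact ⟨W2, Or.inl rfl, hz⟩
      · exact ⟨W3, Or.inr rfl, hz⟩
      · -- z ∈ W1
        rw [hW1def] at hz
        rcases List.mem_cons.mp hz with hz0 | hz
        · exact ⟨W2, Or.inl rfl, hz0 ▸ List.mem_cons_self⟩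
        rcases List.mem_append.mp hz with hz | hz
        · exact ⟨W2, Or.inl rfl, List.mem_cons_of_mem _ (List.mem_append_left _ hz)⟩
        rcases List.mem_append.mp hz with hzc | hz
        · obtain ⟨i, rfl⟩ := hc_mem z hzc
          exact absurd hzS (hcon i)
        rcases List.mem_cons.mp hz with hzy | hz
        · exact ⟨W3, Or.inr rfl, hzy ▸ hyW3⟩
        · exact ⟨W3, Or.inr rfl, List.mem_cons_of_mem _ (List.mem_append_right _ hz)⟩
    · rintro ⟨⟨w, hw, hz⟩, hzS⟩
      refine ⟨⟨w, ?_, hz⟩, hzS⟩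
      rcases hw with rfl | rfl
      · exact Or.inl rfl
      · exact Or.inr (Or.inl rfl)
  have hcov : cover T = cover T' :=
    hS (cover T) ⟨T, hTr, rfl⟩ (cover T') ⟨T', hTr', rfl⟩ hcovS
  -- v0 is in cover T
  have hv0T : v0 ∈ cover T := by
    refine ⟨W1, by simp [hTdef], ?_⟩
    rw [hW1def]
    exact List.mem_cons_of_mem _ (List.mem_append_right _
      (List.mem_append_left _ (hu0 ▸ List.mem_cons_self)))
  rw [hcov] at hv0T
  obtain ⟨w, hw, hv0w⟩ := hv0T
  -- s differs from v0 and vl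
  have hsv0 : G.s ≠ v0 := fun h => G.no_in_s x (h ▸ hx1)
  have hin_vl : ∃ w, G.E w vl := by
    rcases Nat.lt_or_ge k 2 with h2 | h2
    · refine ⟨x, ?_⟩
      have : vl = v0 := by
        rw [hvldef, hv0def]
        congr 1
        simp only [Fin.mk.injEq]
        omega
      rw [this]; exact hx1
    · have h' : (k - 2) + 1 < k := by omega
      refine ⟨v ⟨k - 2, by omega⟩, ?_⟩
      have := (hfwd (k - 2) h').2.1
      have heq : v ⟨k - 2 + 1, h'⟩ = vl := by
        rw [hvldef]; congr 1; simp only [Fin.mk.injEq]; omega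
      rw [heq] at this
      exact this
  have hsvl : G.s ≠ vl := by
    obtain ⟨w', hw'⟩ := hin_vl
    exact fun h => G.no_in_s w' (h ▸ hw')
  -- no v_j is in W3: step lemma
  have hW3chain : List.Chain' G.E W3 := hwalk3.2.2
  have hstep : ∀ i (h : i + 1 < k), v ⟨i, by omega⟩ ∈ W3 → v ⟨i + 1, h⟩ ∈ W3 := by
    intro i h hi
    by_contra hni
    obtain ⟨pre, suf, hws⟩ := List.append_of_mem hi
    have hch : List.Chain G.E (v ⟨i, by omega⟩) suf := by
      have := (List.isChain_split.mp (hws ▸ hW3chain)).2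
      exact this
    have hlast : (v ⟨i, by omega⟩ :: suf).getLast (List.cons_ne_nil _ _) = G.t := by
      have h1 : (pre ++ v ⟨i, by omega⟩ :: suf).getLast? = some G.t := by
        rw [← hws]
        rw [List.getLast?_eq_getLast_of_ne_nil (List.cons_ne_nil _ _), hW3last]
      rw [List.getLast?_append_of_ne_nil pre (List.cons_ne_nil _ _),
        List.getLast?_eq_getLast_of_ne_nil (List.cons_ne_nil _ _)] at h1
      exact Option.some_injective _ h1
    have hne : ∀ b ∈ (v ⟨i, by omega⟩ :: suf), b ≠ v ⟨i + 1, h⟩ := by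
      intro b hb hbe
      apply hni
      rw [← hbe] at hni ⊢
      rw [hws]
      rcases List.mem_cons.mp hb with rfl | hb
      · exact List.mem_append_right _ (List.mem_cons_self)
      · exact List.mem_append_right _ (List.mem_cons_of_mem _ hb)
    have hrtg : Relation.ReflTransGen
        (fun a b => G.E a b ∧ a ≠ v ⟨i + 1, h⟩ ∧ b ≠ v ⟨i + 1, h⟩)
        (v ⟨i, by omega⟩) G.t :=
      List.relationReflTransGen_of_exists_isChain_cons suf (StmtAux.chain_avoid hch hne) hlast
    have hneq : v ⟨i, by omega⟩ ≠ v ⟨i + 1, h⟩ := by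
      intro he
      have := hinj he
      simp only [Fin.mk.injEq] at this
      omega
    exact (hbwd i h).2.2 ⟨hneq, hrtg⟩
  have hnotW3 : ∀ j (hj : j < k), v ⟨j, hj⟩ ∉ W3 := by
    -- downward: if v_j ∈ W3 then v_{k-1} ∈ W3, contradiction
    have hvlnot : vl ∉ W3 := by
      intro hmem
      rw [hW3def, List.mem_cons] at hmem
      rcases hmem with h' | h'
      · exact hsvl h'.symm
      · exact StmtAux.avoid_mem_ne hW3c _ h' rfl
    intro j hj hmem
    apply hvlnot
    -- climb from j to k-1
    have climb : ∀ d, ∀ j' (hj' : j' < k), j' + d = k - 1 → v ⟨j', hj'⟩ ∈ W3 →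
        vl ∈ W3 := by
      intro d
      induction d with
      | zero =>
        intro j' hj' hsum hm
        have : v ⟨j', hj'⟩ = vl := by
          rw [hvldef]; congr 1; simp only [Fin.mk.injEq]; omega
        rwa [this] at hm
      | succ d ih =>
        intro j' hj' hsum hm
        have h' : j' + 1 < k := by omega
        exact ih (j' + 1) h' (by omega) (hstep j' h' hm)
    exact climb (k - 1 - j) j hj (by omega) hmem
  -- but v0 ∈ cover T' means v0 ∈ W2 or W3
  simp only [hT'def, List.mem_cons, List.not_mem_nil, or_false] at hw
  rcases hw with rfl | rfl
  · -- v0 ∈ W2, but W2 avoids v0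
    rw [hW2def, List.mem_cons] at hv0w
    rcases hv0w with h' | h'
    · exact hsv0 h'.symm
    · exact StmtAux.avoid_mem_ne hW2c _ h' rfl
  · exact hnotW3 0 hk0 hv0w
end

section
/- Let H be the subdivision graph of a control-flow graph G, obtained by subdividing every edge of G: the vertex set of H is V ⊔ E, and for each edge e = (u, v) of G, H has the edges (u, v_e) and (v_e, v), with entry s and terminal t. Then no vertex of H corresponding to an original vertex u ∈ V is ambiguous in H. -/
/-- Let `H` be the subdivision graph of `G` (vertex set `V ⊕ E`; each edge
`e = (u, v)` of `G` is replaced by the edges `(u, v_e)` and `(v_e, v)`; entry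
`s`, terminal `t`). Then no vertex of `H` corresponding to an original vertex
`u ∈ V` is ambiguous in `H`. -/
theorem stmt_13 {V : Type*} [Finite V] (G : CFG V)
    (H : CFG (V ⊕ {p : V × V // G.E p.1 p.2}))
    (hs : H.s = Sum.inl G.s) (ht : H.t = Sum.inl G.t)
    (hE : ∀ x y, H.E x y ↔ ∃ e : {p : V × V // G.E p.1 p.2},
      (x = Sum.inl e.1.1 ∧ y = Sum.inr e) ∨ (x = Sum.inr e ∧ y = Sum.inl e.1.2))
    (u : V) :
    ¬ H.Ambiguous (Sum.inl u) := by
  rintro ⟨⟨x, hx, -, hxB⟩, -⟩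
  obtain ⟨e, he⟩ := (hE x (Sum.inl u)).1 hx
  rcases he with ⟨-, h2⟩ | ⟨rfl, h2⟩
  · exact Sum.inl_ne_inr h2
  obtain ⟨hne, hreach⟩ := hxB
  rcases hreach.cases_head with heq | ⟨z, ⟨hez, -, hzne⟩, -⟩
  · rw [ht] at heq; exact Sum.inr_ne_inl heq
  · obtain ⟨e', he'⟩ := (hE _ z).1 hez
    rcases he' with ⟨h3, -⟩ | ⟨h3, rfl⟩
    · exact Sum.inr_ne_inl h3
    · apply hzne
      rw [← Sum.inr.inj h3, ← Sum.inl.inj h2]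
end

section
/- Let H be the subdivision graph of a control-flow graph G (vertex set V ⊔ E; for each edge e = (u, v) of G, H has the edges (u, v_e) and (v_e, v); entry s, terminal t). Then for every valid instrumentation set S of H there exists a valid instrumentation set S' of H with |S'| ≤ |S| and S' consisting only of subdivision vertices, i.e., S' ⊆ {v_e : e ∈ E}. In particular, some minimum-size valid instrumentation set of H is contained in {v_e : e ∈ E}. -/
section Aux

variable {V : Type*}

lemma cover_cons' {x : V} {w : List V} {T : List (List V)} :
    x ∈ cover (w :: T) ↔ x ∈ w ∨ x ∈ cover T := by
  constructor
  · rintro ⟨w', hw', hx⟩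
    rcases List.mem_cons.mp hw' with rfl | h
    · exact Or.inl hx
    · exact Or.inr ⟨w', h, hx⟩
  · rintro (hx | ⟨w', h, hx⟩)
    · exact ⟨w, List.mem_cons_self, hx⟩
    · exact ⟨w', List.mem_cons_of_mem _ h, hx⟩

lemma cover_single' {x : V} {w : List V} : x ∈ cover [w] ↔ x ∈ w := by
  rw [cover_cons']
  simp [cover]

lemma trace_cons {H : CFG V} {w : List V} {T : List (List V)}
    (hw : H.IsWalk w) (hT : H.IsTrace T) : H.IsTrace (w :: T) := by
  intro w' hw'
  rcases List.mem_cons.mp hw' with rfl | h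
  · exact hw
  · exact hT _ h

/-- A valid instrumentation set is exactly a set hitting every nonempty
difference `cover [w] \ cover T`. -/
lemma valid_iff_hit (H : CFG V) (S : Set V) :
    H.ValidInstr S ↔ ∀ w T, H.IsWalk w → H.IsTrace T →
      ¬ (cover [w] ⊆ cover T) → ∃ x ∈ S, x ∈ w ∧ x ∉ cover T := by
  constructor
  · intro hval w T hw hT hns
    by_contra hcon
    push_neg at hcon
    have h1 : cover (w :: T) ∈ H.Profiles := ⟨_, trace_cons hw hT, rfl⟩
    have h2 : cover T ∈ H.Profiles := ⟨_, hT, rfl⟩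
    have heq : cover (w :: T) ∩ S = cover T ∩ S := by
      ext x
      simp only [Set.mem_inter_iff, cover_cons']
      constructor
      · rintro ⟨hx | hx, hxS⟩
        · exact ⟨hcon x hxS hx, hxS⟩
        · exact ⟨hx, hxS⟩
      · rintro ⟨hx, hxS⟩; exact ⟨Or.inr hx, hxS⟩
    have hco := hval _ h1 _ h2 heq
    apply hns
    intro x hx
    rw [cover_single'] at hx
    rw [← hco]
    exact cover_cons'.mpr (Or.inl hx)
  · intro hhit C hC C' hC' hagree
    obtain ⟨T, hT, rfl⟩ := hC
    obtain ⟨T', hT', rfl⟩ := hC'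
    have key : ∀ (A B : List (List V)), H.IsTrace A → H.IsTrace B →
        cover A ∩ S = cover B ∩ S → cover A ⊆ cover B := by
      intro A B hA hB hab x hx
      obtain ⟨w, hwA, hxw⟩ := hx
      have hsub : cover [w] ⊆ cover B := by
        by_contra hns
        obtain ⟨y, hyS, hyw, hyB⟩ := hhit w B (hA _ hwA) hB hns
        have hmem : y ∈ cover A ∩ S := ⟨⟨w, hwA, hyw⟩, hyS⟩
        rw [hab] at hmem
        exact hyB hmem.1
      exact hsub (cover_single'.mpr hxw)
    exact Set.Subset.antisymm (key _ _ hT hT' hagree) (key _ _ hT' hT hagree.symm)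

lemma chain'_pred {β : Type*} {R : β → β → Prop} {l : List β} (hc : l.Chain' R)
    {x : β} (hx : x ∈ l) : l.head? = some x ∨ ∃ y ∈ l, R y x := by
  induction l with
  | nil => cases hx
  | cons a t ih =>
    rcases List.mem_cons.mp hx with rfl | hxt
    · exact Or.inl rfl
    · rcases ih hc.tail hxt with hh | ⟨y, hy, hR⟩
      · refine Or.inr ⟨a, List.mem_cons_self, ?_⟩
        cases t with
        | nil => cases hh
        | cons b t' =>
          obtain rfl : b = x := by simpa using hh
          exact (List.isChain_cons_cons.mp hc).1
      · exact Or.inr ⟨y, List.mem_cons_of_mem _ hy, hR⟩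

lemma chain'_succ {β : Type*} {R : β → β → Prop} {l : List β} (hc : l.Chain' R)
    {x : β} (hx : x ∈ l) : l.getLast? = some x ∨ ∃ y ∈ l, R x y := by
  induction l with
  | nil => cases hx
  | cons a t ih =>
    cases t with
    | nil =>
      obtain rfl : x = a := by simpa using hx
      exact Or.inl rfl
    | cons b t' =>
      rcases List.mem_cons.mp hx with rfl | hxt
      · exact Or.inr ⟨b, by simp, (List.isChain_cons_cons.mp hc).1⟩
      · rcases ih (List.isChain_cons_cons.mp hc).2 hxt with hh | ⟨y, hy, hR⟩
        · left; rw [List.getLast?_cons_cons]; exact hh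
        · exact Or.inr ⟨y, List.mem_cons_of_mem _ hy, hR⟩

end Aux

section Subdiv

variable {V : Type*} {G : CFG V}
  {H : CFG (V ⊕ {p : V × V // G.E p.1 p.2})}
  (hs : H.s = Sum.inl G.s) (ht : H.t = Sum.inl G.t)
  (hE : ∀ x y, H.E x y ↔ ∃ e : {p : V × V // G.E p.1 p.2},
      (x = Sum.inl e.1.1 ∧ y = Sum.inr e) ∨ (x = Sum.inr e ∧ y = Sum.inl e.1.2))

include hE in
/-- Every original vertex on a walk of the subdivision graph has an incident
subdivision vertex on the same walk. -/
lemma incident_of_mem_walk {w : List (V ⊕ {p : V × V // G.E p.1 p.2})}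
    (hw : H.IsWalk w) {u : V} (hu : Sum.inl u ∈ w) :
    ∃ e : {p : V × V // G.E p.1 p.2}, (e.1.1 = u ∨ e.1.2 = u) ∧ Sum.inr e ∈ w := by
  rcases chain'_succ hw.2.2 hu with hlast | ⟨y, hy, hR⟩
  · rcases chain'_pred hw.2.2 hu with hhead | ⟨y, hy, hR⟩
    · exfalso
      have h1 : H.s = Sum.inl u := by
        have := hw.1.symm.trans hhead
        exact Option.some.inj this
      have h2 : H.t = Sum.inl u := by
        have := hw.2.1.symm.trans hlast
        exact Option.some.inj this
      exact H.s_ne_t (h1.trans h2.symm)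
    · rcases (hE _ _).mp hR with ⟨e, ⟨h1, h2⟩ | ⟨h1, h2⟩⟩
      · exact absurd h2 (by simp)
      · exact ⟨e, Or.inr (Sum.inl.inj h2).symm, h1 ▸ hy⟩
  · rcases (hE _ _).mp hR with ⟨e, ⟨h1, h2⟩ | ⟨h1, h2⟩⟩
    · exact ⟨e, Or.inl (Sum.inl.inj h1).symm, h2 ▸ hy⟩
    · exact absurd h1 (by simp)

include hs ht hE in
/-- If a subdivision vertex is covered by a trace, so are both endpoints of
its edge. -/
lemma endpoints_of_edge {T : List (List (V ⊕ {p : V × V // G.E p.1 p.2}))}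
    (hT : H.IsTrace T) {e : {p : V × V // G.E p.1 p.2}} (he : Sum.inr e ∈ cover T) :
    Sum.inl e.1.1 ∈ cover T ∧ Sum.inl e.1.2 ∈ cover T := by
  obtain ⟨w, hwT, hew⟩ := he
  have hw := hT _ hwT
  constructor
  · rcases chain'_pred hw.2.2 hew with hh | ⟨y, hy, hR⟩
    · exfalso
      have := hw.1.symm.trans hh
      rw [hs] at this
      simp at this
    · rcases (hE _ _).mp hR with ⟨e', ⟨h1, h2⟩ | ⟨h1, h2⟩⟩
      · obtain rfl : e' = e := (Sum.inr.inj h2).symm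
        exact ⟨w, hwT, h1 ▸ hy⟩
      · exact absurd h2 (by simp)
  · rcases chain'_succ hw.2.2 hew with hh | ⟨y, hy, hR⟩
    · exfalso
      have := hw.2.1.symm.trans hh
      rw [ht] at this
      simp at this
    · rcases (hE _ _).mp hR with ⟨e', ⟨h1, h2⟩ | ⟨h1, h2⟩⟩
      · exact absurd h1 (by simp)
      · obtain rfl : e' = e := (Sum.inr.inj h1).symm
        exact ⟨w, hwT, h2 ▸ hy⟩

include hs ht hE in
lemma good_edge {w : List (V ⊕ {p : V × V // G.E p.1 p.2})}
    {T : List (List (V ⊕ {p : V × V // G.E p.1 p.2}))}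
    (hw : H.IsWalk w) (hT : H.IsTrace T) {u : V}
    (h1 : Sum.inl u ∈ w) (h2 : Sum.inl u ∉ cover T) :
    ∃ e : {p : V × V // G.E p.1 p.2},
      (e.1.1 = u ∨ e.1.2 = u) ∧ Sum.inr e ∈ w ∧ Sum.inr e ∉ cover T := by
  obtain ⟨e, hinc, hew⟩ := incident_of_mem_walk hE hw h1
  refine ⟨e, hinc, hew, fun hc => h2 ?_⟩
  rcases hinc with h | h
  · exact h ▸ (endpoints_of_edge hs ht hE hT hc).1
  · exact h ▸ (endpoints_of_edge hs ht hE hT hc).2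

include hs ht hE in
lemma main_induction [Finite V] :
    ∀ (n : ℕ) (S : Set (V ⊕ {p : V × V // G.E p.1 p.2})), H.ValidInstr S →
      (S ∩ Set.range Sum.inl).ncard ≤ n →
      ∃ S', H.ValidInstr S' ∧ S'.ncard ≤ S.ncard ∧ S' ⊆ Set.range Sum.inr := by
  intro n
  induction n with
  | zero =>
    intro S hS hcard
    have hemp : S ∩ Set.range Sum.inl = ∅ :=
      (Set.ncard_eq_zero (Set.toFinite _)).mp (Nat.le_zero.mp hcard)
    refine ⟨S, hS, le_rfl, ?_⟩
    intro x hx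
    cases x with
    | inl v =>
      exfalso
      rw [Set.eq_empty_iff_forall_notMem] at hemp
      exact hemp _ ⟨hx, v, rfl⟩
    | inr e => exact ⟨e, rfl⟩
  | succ n ih =>
    intro S hS hcard
    by_cases hemp : S ∩ Set.range Sum.inl = ∅
    · refine ⟨S, hS, le_rfl, ?_⟩
      intro x hx
      cases x with
      | inl v =>
        exfalso
        rw [Set.eq_empty_iff_forall_notMem] at hemp
        exact hemp _ ⟨hx, v, rfl⟩
      | inr e => exact ⟨e, rfl⟩
    · obtain ⟨x, hxS, hxr⟩ := Set.nonempty_iff_ne_empty.mpr hemp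
      obtain ⟨u, rfl⟩ := hxr
      have hmemS : Sum.inl u ∈ S ∩ Set.range Sum.inl := ⟨hxS, ⟨u, rfl⟩⟩
      have hdiffcard : ((S ∩ Set.range Sum.inl) \ {Sum.inl u}).ncard ≤ n := by
        have := Set.ncard_diff_singleton_add_one hmemS (Set.toFinite _)
        omega
      by_cases hvalid : H.ValidInstr (S \ {Sum.inl u})
      · obtain ⟨S', h1, h2, h3⟩ := ih _ hvalid (by
          have heq : (S \ {Sum.inl u}) ∩ Set.range Sum.inl
              = (S ∩ Set.range Sum.inl) \ {Sum.inl u} := by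
            ext z; simp only [Set.mem_inter_iff, Set.mem_diff, Set.mem_singleton_iff]; tauto
          rw [heq]; exact hdiffcard)
        exact ⟨S', h1, h2.trans (Set.ncard_le_ncard Set.diff_subset (Set.toFinite _)), h3⟩
      · rw [valid_iff_hit] at hvalid
        push_neg at hvalid
        obtain ⟨w₀, T₀, hw₀, hT₀, hns₀, hmiss⟩ := hvalid
        obtain ⟨y, hyS, hyw, hyT⟩ := (valid_iff_hit H S).mp hS w₀ T₀ hw₀ hT₀ hns₀
        have hyu : y = Sum.inl u := by
          by_contra hne
          exact hyT (hmiss y ⟨hyS, hne⟩ hyw)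
        subst hyu
        obtain ⟨e, hinc, hew₀, heT₀⟩ := good_edge hs ht hE hw₀ hT₀ hyw hyT
        set S₂ := insert (Sum.inr e) (S \ {Sum.inl u}) with hS₂def
        have hval₂ : H.ValidInstr S₂ := by
          rw [valid_iff_hit]
          intro w T hw hT hns
          by_contra hcon
          push_neg at hcon
          obtain ⟨z, hzS, hzw, hzT⟩ := (valid_iff_hit H S).mp hS w T hw hT hns
          have hzu : z = Sum.inl u := by
            by_contra hne
            exact hzT (hcon z (Set.mem_insert_of_mem _ ⟨hzS, hne⟩) hzw)
          subst hzu
          have hew : Sum.inr e ∉ w := by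
            intro hin
            have heT : Sum.inr e ∈ cover T := hcon _ (Set.mem_insert _ _) hin
            apply hzT
            rcases hinc with h | h
            · exact h ▸ (endpoints_of_edge hs ht hE hT heT).1
            · exact h ▸ (endpoints_of_edge hs ht hE hT heT).2
          have hTw : H.IsTrace (w :: T₀) := trace_cons hw hT₀
          have hns' : ¬ (cover [w₀] ⊆ cover (w :: T₀)) := by
            intro hsub
            have hmem := hsub (cover_single'.mpr hew₀)
            rcases cover_cons'.mp hmem with h | h
            · exact hew h
            · exact heT₀ h
          obtain ⟨z', hz'S, hz'w₀, hz'T⟩ :=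
            (valid_iff_hit H S).mp hS w₀ (w :: T₀) hw₀ hTw hns'
          have hz'T₀ : z' ∉ cover T₀ := fun h => hz'T (cover_cons'.mpr (Or.inr h))
          have hz'w : z' ∉ w := fun h => hz'T (cover_cons'.mpr (Or.inl h))
          by_cases hz'u : z' = Sum.inl u
          · exact hz'w (hz'u ▸ hzw)
          · exact hz'T₀ (hmiss z' ⟨hz'S, hz'u⟩ hz'w₀)
        have hcard₂ : (S₂ ∩ Set.range Sum.inl).ncard ≤ n := by
          have heq : S₂ ∩ Set.range Sum.inl = (S ∩ Set.range Sum.inl) \ {Sum.inl u} := by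
            ext z
            simp only [hS₂def, Set.mem_inter_iff, Set.mem_insert_iff, Set.mem_diff,
              Set.mem_singleton_iff, Set.mem_range]
            constructor
            · rintro ⟨rfl | ⟨hzS, hne⟩, hzr⟩
              · obtain ⟨v, hv⟩ := hzr; exact absurd hv (by simp)
              · exact ⟨⟨hzS, hzr⟩, hne⟩
            · rintro ⟨⟨hzS, hzr⟩, hne⟩
              exact ⟨Or.inr ⟨hzS, hne⟩, hzr⟩
          rw [heq]; exact hdiffcard
        have hcard₂' : S₂.ncard ≤ S.ncard := by
          have h1 : S₂.ncard ≤ (S \ {Sum.inl u}).ncard + 1 :=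
            Set.ncard_insert_le _ _
          have h2 := Set.ncard_diff_singleton_add_one hxS (Set.toFinite S)
          omega
        obtain ⟨S', h1, h2, h3⟩ := ih _ hval₂ hcard₂
        exact ⟨S', h1, h2.trans hcard₂', h3⟩

end Subdiv

/-- Let `H` be the subdivision graph of `G`. Then for every valid
instrumentation set `S` of `H` there is a valid instrumentation set `S'` of
`H` with `|S'| ≤ |S|` consisting only of subdivision vertices. In particular,
some minimum-size valid instrumentation set of `H` consists only of
subdivision vertices. -/
theorem stmt_14 {V : Type*} [Finite V] (G : CFG V)
    (H : CFG (V ⊕ {p : V × V // G.E p.1 p.2}))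
    (hs : H.s = Sum.inl G.s) (ht : H.t = Sum.inl G.t)
    (hE : ∀ x y, H.E x y ↔ ∃ e : {p : V × V // G.E p.1 p.2},
      (x = Sum.inl e.1.1 ∧ y = Sum.inr e) ∨ (x = Sum.inr e ∧ y = Sum.inl e.1.2)) :
    (∀ S : Set (V ⊕ {p : V × V // G.E p.1 p.2}), H.ValidInstr S →
      ∃ S', H.ValidInstr S' ∧ S'.ncard ≤ S.ncard ∧ S' ⊆ Set.range Sum.inr) ∧
    (∃ S', H.ValidInstr S' ∧ S' ⊆ Set.range Sum.inr ∧
      ∀ S, H.ValidInstr S → S'.ncard ≤ S.ncard) := by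
  constructor
  · intro S hS
    exact main_induction hs ht hE (S ∩ Set.range Sum.inl).ncard S hS le_rfl
  · have huniv : H.ValidInstr Set.univ := by
      intro C _ C' _ h
      simpa using h
    have hNs : {n | ∃ S, H.ValidInstr S ∧ S.ncard = n}.Nonempty :=
      ⟨Set.univ.ncard, Set.univ, huniv, rfl⟩
    obtain ⟨S₀, hS₀v, hS₀n⟩ := Nat.sInf_mem hNs
    obtain ⟨S', h1, h2, h3⟩ :=
      main_induction hs ht hE (S₀ ∩ Set.range Sum.inl).ncard S₀ hS₀v le_rfl
    exact ⟨S', h1, h3, fun S hS =>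
      le_trans (h2.trans_eq hS₀n) (Nat.sInf_le ⟨S, hS, rfl⟩)⟩
end

section
/- Let u be an ambiguous vertex of a control-flow graph G, let X = N^in(u) ∩ A(u) ∩ B(u) and Y = N^out(u) ∩ A(u) ∩ B(u). Then every valid edge-instrumentation set S for vertex coverage contains all edges {(x, u) : x ∈ X} or contains all edges {(u, y) : y ∈ Y}. -/
namespace Stmt15Aux

open List

variable {α : Type*}

/-- A pair is an edge of `l` iff `[p.1, p.2]` is an infix of `l`. -/
lemma infix_of_mem_zip : ∀ {l : List α} {p : α × α},
    p ∈ l.zip l.tail → [p.1, p.2] <:+: l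
  | [], p => by simp
  | [a], p => by simp
  | a :: b :: l, p => by
    intro hp
    rw [show (a :: b :: l).tail = b :: l from rfl, zip_cons_cons, mem_cons] at hp
    rcases hp with h | h
    · subst h; exact ⟨[], l, rfl⟩
    · exact (infix_of_mem_zip h).trans ((suffix_cons a (b :: l)).isInfix)

lemma mem_zip_of_infix : ∀ {l : List α} {a b : α},
    [a, b] <:+: l → (a, b) ∈ l.zip l.tail := by
  intro l a b h
  obtain ⟨s, t, rfl⟩ := h
  induction s with
  | nil => simp
  | cons c s ih =>
    rw [show c :: s ++ [a, b] ++ t = c :: (s ++ [a, b] ++ t) by simp]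
    have hne : s ++ [a, b] ++ t ≠ [] := by simp
    obtain ⟨d, L, hdl⟩ := exists_cons_of_ne_nil hne
    rw [hdl]
    rw [show (c :: d :: L).tail = d :: L from rfl, zip_cons_cons, mem_cons]
    right
    simpa [hdl] using ih

lemma mem_zip_append_left {l m : List α} {p : α × α}
    (h : p ∈ l.zip l.tail) : p ∈ (l ++ m).zip (l ++ m).tail :=
  mem_zip_of_infix ((infix_of_mem_zip h).trans (l.prefix_append m).isInfix)

lemma mem_zip_append_right {l m : List α} {p : α × α}
    (h : p ∈ m.zip m.tail) : p ∈ (l ++ m).zip (l ++ m).tail :=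
  mem_zip_of_infix ((infix_of_mem_zip h).trans (l.suffix_append m).isInfix)

lemma mem_zip_junction {l m : List α} {a b : α}
    (hl : l.getLast? = some a) (hm : m.head? = some b) :
    (a, b) ∈ (l ++ m).zip (l ++ m).tail := by
  have hlne : l ≠ [] := by rintro rfl; simp at hl
  have hlast : l.getLast hlne = a := by
    rw [getLast?_eq_getLast hlne] at hl; exact Option.some_injective _ hl
  have hmne : m ≠ [] := by rintro rfl; simp at hm
  obtain ⟨c, m', rfl⟩ := exists_cons_of_ne_nil hmne
  have hc : c = b := by simpa using hm
  subst hc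
  refine mem_zip_of_infix ⟨l.dropLast, m', ?_⟩
  have := l.dropLast_append_getLast hlne
  rw [hlast] at this
  rw [← this]
  simp

/-- splitting edges of an append -/
lemma mem_zip_append_split : ∀ {l : List α} {m : List α} {p : α × α},
    p ∈ (l ++ m).zip (l ++ m).tail →
    p ∈ l.zip l.tail ∨ p ∈ m.zip m.tail ∨
      (l.getLast? = some p.1 ∧ m.head? = some p.2) := by
  intro l m p h
  rcases infix_of_mem_zip h with ⟨s, t, hst⟩
  -- l ++ m = s ++ [p.1, p.2] ++ t
  rcases le_or_gt (s.length + 2) l.length with hle | hlt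
  · -- the pair sits inside l
    left
    apply mem_zip_of_infix
    refine ⟨s, (l.drop (s.length + 2)), ?_⟩
    have : (s ++ [p.1, p.2] ++ l.drop (s.length + 2)) ++ m = l ++ m := by
      rw [← hst]
      have hdrop : l.drop (s.length + 2) ++ m = (l ++ m).drop (s.length + 2) := by
        rw [drop_append_of_le_length hle]
      rw [append_assoc, append_assoc, hdrop, ← hst]
      simp [Nat.add_comm]
    exact append_cancel_right this
  · rcases le_or_gt l.length s.length with hle2 | hlt2
    · -- the pair sits inside m
      right; left
      apply mem_zip_of_infix
      refine ⟨s.drop l.length, t, ?_⟩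
      have h' : (s ++ ([p.1, p.2] ++ t)).take l.length = (l ++ m).take l.length := by
        rw [← append_assoc, hst]
      rw [take_append_of_le_length hle2, take_append_of_le_length le_rfl, take_length] at h'
      have hls : l ++ s.drop l.length = s := by
        have htd := take_append_drop l.length s
        rw [h'] at htd; exact htd
      have key : l ++ (s.drop l.length ++ ([p.1, p.2] ++ t)) = l ++ m := by
        rw [← append_assoc, hls, ← append_assoc, hst]
      have hm := append_cancel_left key
      rw [← hm]; simp [append_assoc]
    · -- junction: s.length = l.length - 1
      right; right
      have hll : l.length = s.length + 1 := by omega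
      have h1 : l = s ++ [p.1] := by
        have : l = (l ++ m).take l.length := by rw [take_append_of_le_length le_rfl, take_length]
        rw [this, ← hst, hll]
        rw [show s ++ [p.1, p.2] ++ t = s ++ [p.1] ++ ([p.2] ++ t) by simp]
        rw [take_append_of_le_length (by simp)]
        simp
      have h2 : m = p.2 :: t := by
        have key : (s ++ [p.1]) ++ (p.2 :: t) = (s ++ [p.1]) ++ m := by
          rw [append_assoc, show [p.1] ++ p.2 :: t = [p.1, p.2] ++ t from rfl,
            ← append_assoc, hst, h1]
        exact (append_cancel_left key).symm
      constructor
      · rw [h1]; simp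
      · rw [h2]; rfl

/-- Everything in a chain avoiding `u` (in the sense that the relation forbids
`u` as target) and starting away from `u` is distinct from `u`. -/
lemma chain'_ne_of_head {r : α → α → Prop} {u : α}
    (hr : ∀ x y, r x y → y ≠ u) :
    ∀ {l : List α}, l.Chain' r → (∀ a ∈ l.head?, a ≠ u) → ∀ v ∈ l, v ≠ u := by
  intro l
  induction l with
  | nil => simp
  | cons b l ih =>
    intro hc hh v hv
    rcases mem_cons.mp hv with rfl | hv
    · exact hh v rfl
    · cases l with
      | nil => simp at hv
      | cons c l' =>
        rcases isChain_cons_cons.mp hc with ⟨hbc, hc'⟩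
        exact ih hc' (by intro a ha; simp at ha; subst ha; exact hr _ _ hbc) v hv

/-- Walk specification: nonempty list from `a` to `b` chained by `r`. -/
def WSpec (r : α → α → Prop) (a b : α) (w : List α) : Prop :=
  w.head? = some a ∧ w.getLast? = some b ∧ w.Chain' r

lemma WSpec.ne_nil {r : α → α → Prop} {a b : α} {w : List α} (h : WSpec r a b w) :
    w ≠ [] := by rintro rfl; simp [WSpec] at h

lemma wspec_of_rtg {r : α → α → Prop} {a b : α} (h : Relation.ReflTransGen r a b) :
    ∃ w, WSpec r a b w := by
  obtain ⟨l, hc, hlast⟩ := exists_isChain_cons_of_relationReflTransGen h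
  exact ⟨a :: l, rfl, by rw [getLast?_eq_getLast (cons_ne_nil a l), hlast], hc⟩

lemma WSpec.imp {r r' : α → α → Prop} {a b : α} {w : List α}
    (hrr : ∀ x y, r x y → r' x y) (h : WSpec r a b w) : WSpec r' a b w :=
  ⟨h.1, h.2.1, h.2.2.imp (fun {x y} => hrr x y)⟩

lemma WSpec.concat {r : α → α → Prop} {a b c : α} {w₁ w₂ : List α}
    (h1 : WSpec r a b w₁) (h2 : WSpec r b c w₂) : WSpec r a c (w₁ ++ w₂.tail) := by
  obtain ⟨h1h, h1l, h1c⟩ := h1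
  obtain ⟨h2h, h2l, h2c⟩ := h2
  obtain ⟨w₂', rfl⟩ : ∃ w₂', w₂ = b :: w₂' := by
    cases w₂ with
    | nil => simp at h2h
    | cons z zs =>
      have hz : z = b := by simpa using h2h
      exact ⟨zs, by rw [hz]⟩
  obtain ⟨w₁', rfl⟩ : ∃ w₁', w₁ = a :: w₁' := by
    cases w₁ with
    | nil => simp at h1h
    | cons z zs =>
      have hz : z = a := by simpa using h1h
      exact ⟨zs, by rw [hz]⟩
  refine ⟨by simp, ?_, ?_⟩
  · cases w₂' with
    | nil =>
      simp only [tail_cons, append_nil]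
      have : b = c := by simpa using h2l
      subst this; exact h1l
    | cons d w₂'' =>
      rw [tail_cons, getLast?_append_of_ne_nil _ (cons_ne_nil d w₂'')]
      rw [← getLast?_append_cons [b] d w₂'']
      simpa using h2l
  · rw [tail_cons]
    refine isChain_append.mpr ⟨h1c, h2c.tail, ?_⟩
    intro x hx y hy
    have hx' : x = b := by rw [h1l] at hx; exact (by simpa using hx : b = x).symm
    subst hx'
    exact (isChain_cons.mp h2c).1 y hy

end Stmt15Aux

/-- Let `u` be an ambiguous vertex, `X = Nin u ∩ A u ∩ B u` and
`Y = Nout u ∩ A u ∩ B u`. Then every valid edge-instrumentation set `S ⊆ E`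
for vertex coverage contains all edges `(x, u)` for `x ∈ X`, or contains all
edges `(u, y)` for `y ∈ Y`. -/



theorem stmt_15 {V : Type*} [Finite V] (G : CFG V) (u : V)
    (hu : G.Ambiguous u) (S : Set (V × V)) (hSE : ∀ p ∈ S, G.E p.1 p.2)
    (hS : G.ValidEdgeInstr S) :
    (∀ x ∈ G.Nin u ∩ (G.A u ∩ G.B u), (x, u) ∈ S) ∨
    (∀ y ∈ G.Nout u ∩ (G.A u ∩ G.B u), (u, y) ∈ S) := by
  classical
  by_contra hcon
  push_neg at hcon
  obtain ⟨⟨x, hxmem, hxS⟩, ⟨y, hymem, hyS⟩⟩ := hcon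
  have hxin : G.E x u := hxmem.1
  have hyin : G.E u y := hymem.1
  set r : V → V → Prop := fun a b => G.E a b ∧ a ≠ u ∧ b ≠ u with hr
  obtain ⟨hxne, hxsr⟩ := hxmem.2.1
  obtain ⟨_, hxtr⟩ := hxmem.2.2
  obtain ⟨hyne, hysr⟩ := hymem.2.1
  obtain ⟨_, hytr⟩ := hymem.2.2
  have hrE : ∀ a b, r a b → G.E a b := fun _ _ h => h.1
  have hrne : ∀ a b, r a b → b ≠ u := fun _ _ h => h.2.2
  have hsu : G.s ≠ u := by
    rcases hxsr.cases_head with h | ⟨c, hc, _⟩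
    · rw [h]; exact hxne
    · exact hc.2.1
  obtain ⟨P1, hP1⟩ := Stmt15Aux.wspec_of_rtg hxsr
  obtain ⟨Q1, hQ1⟩ := Stmt15Aux.wspec_of_rtg hxtr
  obtain ⟨P2, hP2⟩ := Stmt15Aux.wspec_of_rtg hysr
  obtain ⟨Q2, hQ2⟩ := Stmt15Aux.wspec_of_rtg hytr
  -- put Q2 in cons form
  obtain ⟨q2, rfl⟩ : ∃ l, Q2 = y :: l := by
    cases Q2 with
    | nil => simp [Stmt15Aux.WSpec] at hQ2
    | cons z zs =>
      have hz : z = y := Option.some_injective _ hQ2.1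
      exact ⟨zs, by rw [hz]⟩
  set W1 : List V := P1 ++ Q1.tail with hW1def
  set W2 : List V := P2 ++ q2 with hW2def
  have hW1 : Stmt15Aux.WSpec r G.s G.t W1 := hP1.concat hQ1
  have hW2 : Stmt15Aux.WSpec r G.s G.t W2 := hP2.concat hQ2
  have hP1E : Stmt15Aux.WSpec G.E G.s x P1 := hP1.imp hrE
  have hstep : Stmt15Aux.WSpec G.E x u [x, u] :=
    ⟨rfl, by simp, List.isChain_pair.mpr hxin⟩
  have hPxu : Stmt15Aux.WSpec G.E G.s u (P1 ++ [u]) := hP1E.concat hstep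
  have hQu : Stmt15Aux.WSpec G.E u G.t (u :: y :: q2) := by
    refine ⟨rfl, ?_, ?_⟩
    · show ([u] ++ (y :: q2)).getLast? = some G.t
      rw [List.getLast?_append_of_ne_nil _ (List.cons_ne_nil y q2)]
      exact hQ2.2.1
    · refine List.isChain_cons.mpr ⟨?_, (hQ2.imp hrE).2.2⟩
      intro z hz
      have hzy : y = z := by simpa using hz
      rw [← hzy]; exact hyin
  have hW : Stmt15Aux.WSpec G.E G.s G.t ((P1 ++ [u]) ++ (y :: q2)) := hPxu.concat hQu
  set W : List V := (P1 ++ [u]) ++ (y :: q2) with hWdef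
  have hwalk : ∀ w, Stmt15Aux.WSpec G.E G.s G.t w → G.IsWalk w :=
    fun w h => ⟨h.1, h.2.1, h.2.2⟩
  have hT1 : G.IsTrace [W, W1, W2] := by
    intro w hw
    simp only [List.mem_cons, List.not_mem_nil, or_false] at hw
    rcases hw with rfl | rfl | rfl
    · exact hwalk _ hW
    · exact hwalk _ (hW1.imp hrE)
    · exact hwalk _ (hW2.imp hrE)
  have hT2 : G.IsTrace [W1, W2] := by
    intro w hw
    simp only [List.mem_cons, List.not_mem_nil, or_false] at hw
    rcases hw with rfl | rfl
    · exact hwalk _ (hW1.imp hrE)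
    · exact hwalk _ (hW2.imp hrE)
  have hedge : edgeCover [W, W1, W2] ∩ S = edgeCover [W1, W2] ∩ S := by
    apply Set.Subset.antisymm
    · rintro p ⟨⟨w, hw, hp⟩, hpS⟩
      refine ⟨?_, hpS⟩
      simp only [List.mem_cons, List.not_mem_nil, or_false] at hw
      rcases hw with rfl | rfl | rfl
      · -- the walk through u
        rcases Stmt15Aux.mem_zip_append_split hp with h1 | h2 | ⟨hj1, hj2⟩
        · -- inside P1 ++ [u]
          rcases Stmt15Aux.mem_zip_append_split h1 with h1a | h1b | ⟨hj1, hj2⟩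
          · exact ⟨W1, by simp, Stmt15Aux.mem_zip_append_left h1a⟩
          · simp at h1b
          · -- p = (x, u)
            exfalso
            have hp1 : p.1 = x := by
              rw [hP1.2.1] at hj1; exact (Option.some_injective _ hj1).symm
            have hp2 : p.2 = u := by simpa using hj2.symm
            have : p = (x, u) := Prod.ext hp1 hp2
            exact hxS (this ▸ hpS)
        · -- inside y :: q2
          rcases Stmt15Aux.mem_zip_append_split (l := [y]) (m := q2) (by simpa using h2)
            with h2a | h2b | ⟨hj1, hj2⟩
          · simp at h2a
          · exact ⟨W2, by simp, Stmt15Aux.mem_zip_append_right h2b⟩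
          · -- p = (y, head q2), the junction edge of W2
            have hp1 : p.1 = y := by simpa using hj1.symm
            refine ⟨W2, by simp, ?_⟩
            have : (p.1, p.2) ∈ W2.zip W2.tail := by
              rw [hp1]
              exact Stmt15Aux.mem_zip_junction hP2.2.1 hj2
            simpa using this
        · -- p = (u, y)
          exfalso
          have hp1 : p.1 = u := by
            rw [List.getLast?_append_of_ne_nil _ (List.cons_ne_nil u [])] at hj1
            simpa using hj1.symm
          have hp2 : p.2 = y := by simpa using hj2.symm
          have : p = (u, y) := Prod.ext hp1 hp2
          exact hyS (this ▸ hpS)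
      · exact ⟨W1, by simp, hp⟩
      · exact ⟨W2, by simp, hp⟩
    · rintro p ⟨⟨w, hw, hp⟩, hpS⟩
      refine ⟨⟨w, ?_, hp⟩, hpS⟩
      simp only [List.mem_cons, List.not_mem_nil, or_false] at hw
      simp only [List.mem_cons]
      tauto
  have hcov : cover [W, W1, W2] = cover [W1, W2] := hS _ _ hT1 hT2 hedge
  have huT1 : u ∈ cover [W, W1, W2] := ⟨W, by simp, by simp [hWdef]⟩
  rw [hcov] at huT1
  obtain ⟨w, hw, hu'⟩ := huT1
  simp only [List.mem_cons, List.not_mem_nil, or_false] at hw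
  have : u ≠ u := by
    rcases hw with rfl | rfl
    · refine Stmt15Aux.chain'_ne_of_head hrne hW1.2.2 ?_ u hu'
      intro a ha
      rw [hW1.1] at ha
      have hsa : G.s = a := by simpa using ha
      rw [← hsa]; exact hsu
    · refine Stmt15Aux.chain'_ne_of_head hrne hW2.2.2 ?_ u hu'
      intro a ha
      rw [hW2.1] at ha
      have hsa : G.s = a := by simpa using ha
      rw [← hsa]; exact hsu
  exact this rfl
end

section
/- Let G be the control-flow graph formed by the series composition of k diamonds: vertices v_1, …, v_{3k+1}, entry v_1, terminal v_{3k+1}, and for each 0 ≤ j < k the edges (v_{3j+1}, v_{3j+2}), (v_{3j+1}, v_{3j+3}), (v_{3j+2}, v_{3j+4}), (v_{3j+3}, v_{3j+4}). Then each of the 2k vertices of in-degree 1 (the vertices v_{3j+2} and v_{3j+3} for 0 ≤ j < k) is ambiguous, and consequently every valid instrumentation set of G has size at least 2k. -/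
namespace Stmt18

def dwalk (f : ℕ → ℕ) : ℕ → List ℕ
  | 0 => [0]
  | m+1 => dwalk f m ++ [3*m + f m, 3*m+3]

lemma dwalk_head (f : ℕ → ℕ) (m : ℕ) : (dwalk f m).head? = some 0 := by
  induction m with
  | zero => rfl
  | succ n ih => rw [dwalk, List.head?_append, ih]; rfl

lemma dwalk_last (f : ℕ → ℕ) (m : ℕ) : (dwalk f m).getLast? = some (3*m) := by
  cases m with
  | zero => rfl
  | succ n => rw [dwalk, List.getLast?_append]; rfl

lemma mem_dwalk₀ (f : ℕ → ℕ) {m j : ℕ} (h : j ≤ m) : 3*j ∈ dwalk f m := by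
  induction m with
  | zero => interval_cases j; simp [dwalk]
  | succ n ih =>
    rw [dwalk]
    rcases Nat.lt_or_ge j (n+1) with h' | h'
    · exact List.mem_append_left _ (ih (by omega))
    · have : j = n + 1 := by omega
      subst this
      have : 3 * (n+1) = 3*n+3 := by ring
      rw [this]; simp

lemma mem_dwalk₁ (f : ℕ → ℕ) {m j : ℕ} (h : j < m) : 3*j + f j ∈ dwalk f m := by
  induction m with
  | zero => omega
  | succ n ih =>
    rw [dwalk]
    rcases Nat.lt_or_ge j n with h' | h'
    · exact List.mem_append_left _ (ih h')
    · have : j = n := by omega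
      subst this; simp

lemma dwalk_mem (f : ℕ → ℕ) {m x : ℕ} (h : x ∈ dwalk f m) :
    (∃ j, j ≤ m ∧ x = 3*j) ∨ (∃ j, j < m ∧ x = 3*j + f j) := by
  induction m with
  | zero => simp [dwalk] at h; exact Or.inl ⟨0, by omega⟩
  | succ n ih =>
    rw [dwalk, List.mem_append] at h
    rcases h with h | h
    · rcases ih h with ⟨j, hj, rfl⟩ | ⟨j, hj, rfl⟩
      · exact Or.inl ⟨j, by omega, rfl⟩
      · exact Or.inr ⟨j, by omega, rfl⟩
    · simp at h
      rcases h with rfl | rfl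
      · exact Or.inr ⟨n, by omega, rfl⟩
      · exact Or.inl ⟨n+1, by omega, by ring⟩

lemma dwalk_chain (f : ℕ → ℕ) (R : ℕ → ℕ → Prop) {m : ℕ}
    (h : ∀ j < m, R (3*j) (3*j + f j) ∧ R (3*j + f j) (3*j+3)) :
    (dwalk f m).Chain' R := by
  induction m with
  | zero => simp [dwalk]; exact List.isChain_singleton _
  | succ n ih =>
    change List.IsChain _ _; rw [dwalk, List.isChain_append]
    refine ⟨ih (fun j hj => h j (by omega)), ?_, ?_⟩
    · simp only [List.isChain_pair]
      exact (h n (by omega)).2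
    · intro x hx y hy
      rw [dwalk_last] at hx
      simp at hx hy
      subst hx; subst hy
      exact (h n (by omega)).1

lemma reach_seg (R : ℕ → ℕ → Prop) (c : ℕ) {a b : ℕ} (hab : a ≤ b)
    (h : ∀ ℓ, a ≤ ℓ → ℓ < b → R (3*ℓ) (3*ℓ+c) ∧ R (3*ℓ+c) (3*ℓ+3)) :
    Relation.ReflTransGen R (3*a) (3*b) := by
  induction b with
  | zero =>
    have : a = 0 := by omega
    subst this; exact .refl
  | succ n ih =>
    rcases Nat.eq_or_lt_of_le hab with rfl | h'
    · exact .refl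
    · have hn : a ≤ n := by omega
      have H := ih hn (fun ℓ h1 h2 => h ℓ h1 (by omega))
      have h3 : 3 * (n+1) = 3*n+3 := by ring
      rw [h3]
      exact (H.tail (h n hn (by omega)).1).tail (h n hn (by omega)).2

end Stmt18

namespace Stmt18

def emb (k n : ℕ) : Fin (3*k+1) := ⟨n % (3*k+1), Nat.mod_lt _ (by omega)⟩

lemma emb_val (k : ℕ) {n : ℕ} (h : n ≤ 3*k) : ((emb k n : Fin (3*k+1)) : ℕ) = n :=
  Nat.mod_eq_of_lt (by omega)

lemma emb_self (k : ℕ) (v : Fin (3*k+1)) : emb k (v : ℕ) = v :=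
  Fin.ext (Nat.mod_eq_of_lt v.isLt)

def gch (j c d i : ℕ) : ℕ := if i = j then 3 - c else d

end Stmt18

open Stmt18 in
/-- For the series composition of `k` diamonds (vertices `v₁, …, v₃ₖ₊₁`,
here indices `0, …, 3k`), each of the `2k` vertices of in-degree 1 (the
vertices `v₃ⱼ₊₂` and `v₃ⱼ₊₃`, i.e. indices `3j+1` and `3j+2`, for `j < k`) is
ambiguous, and consequently every valid instrumentation set has size at
least `2k`. -/
theorem stmt_18 (k : ℕ) (hk : 1 ≤ k) (G : CFG (Fin (3 * k + 1)))
    (hs : G.s = ⟨0, by omega⟩) (ht : G.t = ⟨3 * k, by omega⟩)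
    (hE : ∀ a b : Fin (3 * k + 1), G.E a b ↔ ∃ j < k,
      ((a : ℕ) = 3 * j ∧ (b : ℕ) = 3 * j + 1) ∨
      ((a : ℕ) = 3 * j ∧ (b : ℕ) = 3 * j + 2) ∨
      ((a : ℕ) = 3 * j + 1 ∧ (b : ℕ) = 3 * j + 3) ∨
      ((a : ℕ) = 3 * j + 2 ∧ (b : ℕ) = 3 * j + 3)) :
    (∀ j (hj : j < k),
      G.Ambiguous ⟨3 * j + 1, by omega⟩ ∧ G.Ambiguous ⟨3 * j + 2, by omega⟩) ∧
    (∀ S : Set (Fin (3 * k + 1)), G.ValidInstr S → 2 * k ≤ S.ncard) := by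

  have edge : ∀ m c, m < k → (c = 1 ∨ c = 2) →
      G.E (emb k (3*m)) (emb k (3*m+c)) ∧ G.E (emb k (3*m+c)) (emb k (3*m+3)) := by
    intro m c hm hc
    constructor <;> (rw [hE]; refine ⟨m, hm, ?_⟩; rw [emb_val k, emb_val k] <;> omega)
  have hs0 : G.s = emb k 0 := by
    rw [hs]; apply Fin.ext; simp [emb]
  have ht0 : G.t = emb k (3*k) := by
    rw [ht]; apply Fin.ext; exact (emb_val k (le_refl _)).symm
  have walkOK : ∀ f : ℕ → ℕ, (∀ j, j < k → f j = 1 ∨ f j = 2) →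
      G.IsWalk ((dwalk f k).map (emb k)) := by
    intro f hf
    refine ⟨?_, ?_, ?_⟩
    · rw [List.head?_map, dwalk_head, Option.map_some, hs0]
    · rw [List.getLast?_map, dwalk_last, Option.map_some, ht0]
    · change List.IsChain _ _; rw [List.isChain_map]
      apply dwalk_chain
      intro j hj
      exact edge j (f j) hj (hf j hj)
  have amb : ∀ j c, j < k → (c = 1 ∨ c = 2) → G.Ambiguous (emb k (3*j+c)) := by
    intro j c hj hc
    set u : Fin (3*k+1) := emb k (3*j+c) with hu
    have huval : (u : ℕ) = 3*j+c := emb_val k (by omega)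
    have hne : ∀ p, p ≤ 3*k → p ≠ 3*j+c → emb k p ≠ u := by
      intro p hp hpne heq
      apply hpne
      rw [← emb_val k hp, heq, huval]
    set c' := 3 - c with hc'
    have hcc : c' = 1 ∨ c' = 2 := by omega
    set R' : Fin (3*k+1) → Fin (3*k+1) → Prop :=
      fun x y => G.E x y ∧ x ≠ u ∧ y ≠ u with hR'
    have seg : ∀ a b, a ≤ b → b ≤ k →
        Relation.ReflTransGen R' (emb k (3*a)) (emb k (3*b)) := by
      intro a b hab hbk
      refine Relation.ReflTransGen.lift (emb k) (fun p q h => h) _ _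
        (reach_seg (fun p q => R' (emb k p) (emb k q)) c' hab ?_)
      intro ℓ h1 h2
      have hℓ : ℓ < k := by omega
      exact ⟨⟨(edge ℓ c' hℓ hcc).1, hne _ (by omega) (by omega), hne _ (by omega) (by omega)⟩,
             ⟨(edge ℓ c' hℓ hcc).2, hne _ (by omega) (by omega), hne _ (by omega) (by omega)⟩⟩
    have h3j1 : (3:ℕ)*(j+1) = 3*j+3 := by ring
    constructor
    · refine ⟨emb k (3*j), ?_, ?_, ?_⟩
      · show G.E (emb k (3*j)) u
        rw [hu]; exact (edge j c hj hc).1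
      · refine ⟨hne _ (by omega) (by omega), ?_⟩
        rw [hs0]
        have := seg 0 j (by omega) (by omega)
        simpa using this
      · refine ⟨hne _ (by omega) (by omega), ?_⟩
        rw [ht0]
        have hstep1 : R' (emb k (3*j)) (emb k (3*j+c')) :=
          ⟨(edge j c' hj hcc).1, hne _ (by omega) (by omega), hne _ (by omega) (by omega)⟩
        have hstep2 : R' (emb k (3*j+c')) (emb k (3*j+3)) :=
          ⟨(edge j c' hj hcc).2, hne _ (by omega) (by omega), hne _ (by omega) (by omega)⟩
        have hseg := seg (j+1) k (by omega) (by omega)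
        rw [h3j1] at hseg
        exact (Relation.ReflTransGen.head hstep2 hseg).head hstep1
    · refine ⟨emb k (3*j+3), ?_, ?_, ?_⟩
      · show G.E u (emb k (3*j+3))
        rw [hu]; exact (edge j c hj hc).2
      · refine ⟨hne _ (by omega) (by omega), ?_⟩
        rw [hs0]
        have := seg 0 (j+1) (by omega) (by omega)
        rw [h3j1] at this
        simpa using this
      · refine ⟨hne _ (by omega) (by omega), ?_⟩
        rw [ht0]
        have hseg := seg (j+1) k (by omega) (by omega)
        rw [h3j1] at hseg
        exact hseg
  constructor
  · intro j hj
    constructor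
    · have : (⟨3*j+1, by omega⟩ : Fin (3*k+1)) = emb k (3*j+1) :=
        Fin.ext (emb_val k (by omega)).symm
      rw [this]; exact amb j 1 hj (Or.inl rfl)
    · have : (⟨3*j+2, by omega⟩ : Fin (3*k+1)) = emb k (3*j+2) :=
        Fin.ext (emb_val k (by omega)).symm
      rw [this]; exact amb j 2 hj (Or.inr rfl)
  · intro S hS
    classical
    have claim : ∀ j c, j < k → (c = 1 ∨ c = 2) → emb k (3*j+c) ∈ S := by
      intro j c hj hc
      by_contra hnotin
      set u : Fin (3*k+1) := emb k (3*j+c) with hu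
      have huval : (u : ℕ) = 3*j+c := emb_val k (by omega)
      set Tf : List (List (Fin (3*k+1))) :=
        [(dwalk (fun _ => 1) k).map (emb k), (dwalk (fun _ => 2) k).map (emb k)] with hTf
      set Tm : List (List (Fin (3*k+1))) :=
        [(dwalk (gch j c 1) k).map (emb k), (dwalk (gch j c 2) k).map (emb k)] with hTm
      have hgch : ∀ d i, gch j c d i = if i = j then 3 - c else d := fun _ _ => rfl
      have hTfT : G.IsTrace Tf := by
        intro w hw
        simp only [hTf, List.mem_cons, List.not_mem_nil, or_false] at hw
        rcases hw with rfl | rfl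
        · exact walkOK _ (fun _ _ => Or.inl rfl)
        · exact walkOK _ (fun _ _ => Or.inr rfl)
      have hTmT : G.IsTrace Tm := by
        intro w hw
        simp only [hTm, List.mem_cons, List.not_mem_nil, or_false] at hw
        rcases hw with rfl | rfl <;>
          exact walkOK _ (fun i _ => by rw [hgch]; split <;> omega)
      have full : ∀ v, v ∈ cover Tf := by
        intro v
        have hv : (v : ℕ) ≤ 3*k := by omega
        have hr : (v:ℕ) % 3 = 0 ∨ (v:ℕ) % 3 = 1 ∨ (v:ℕ) % 3 = 2 := by omega
        rcases hr with hr | hr | hr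
        · refine ⟨(dwalk (fun _ => 1) k).map (emb k), by simp [hTf], ?_⟩
          have he : (v:ℕ) = 3*((v:ℕ)/3) := by omega
          rw [← emb_self k v, he]
          exact List.mem_map_of_mem (mem_dwalk₀ _ (by omega))
        · refine ⟨(dwalk (fun _ => 1) k).map (emb k), by simp [hTf], ?_⟩
          have he : (v:ℕ) = 3*((v:ℕ)/3) + 1 := by omega
          rw [← emb_self k v, he]
          exact List.mem_map_of_mem (f := emb k) (mem_dwalk₁ (fun _ => 1) (by omega : (v:ℕ)/3 < k))
        · refine ⟨(dwalk (fun _ => 2) k).map (emb k), by simp [hTf], ?_⟩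
          have he : (v:ℕ) = 3*((v:ℕ)/3) + 2 := by omega
          rw [← emb_self k v, he]
          exact List.mem_map_of_mem (f := emb k) (mem_dwalk₁ (fun _ => 2) (by omega : (v:ℕ)/3 < k))
      have fullm : ∀ v, v ≠ u → v ∈ cover Tm := by
        intro v hvne
        have hv : (v : ℕ) ≤ 3*k := by omega
        have hvval : (v:ℕ) ≠ 3*j+c := fun h => hvne (by rw [← emb_self k v, h, ← hu])
        have hr : (v:ℕ) % 3 = 0 ∨ (v:ℕ) % 3 = 1 ∨ (v:ℕ) % 3 = 2 := by omega
        rcases hr with hr | hr | hr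
        · refine ⟨(dwalk (gch j c 1) k).map (emb k), by simp [hTm], ?_⟩
          have he : (v:ℕ) = 3*((v:ℕ)/3) := by omega
          rw [← emb_self k v, he]
          exact List.mem_map_of_mem (mem_dwalk₀ _ (by omega))
        · refine ⟨(dwalk (gch j c 1) k).map (emb k), by simp [hTm], ?_⟩
          have he : (v:ℕ) = 3*((v:ℕ)/3) + gch j c 1 ((v:ℕ)/3) := by
            rw [hgch]; split <;> omega
          rw [← emb_self k v, he]
          exact List.mem_map_of_mem (mem_dwalk₁ _ (by omega))
        · refine ⟨(dwalk (gch j c 2) k).map (emb k), by simp [hTm], ?_⟩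
          have he : (v:ℕ) = 3*((v:ℕ)/3) + gch j c 2 ((v:ℕ)/3) := by
            rw [hgch]; split <;> omega
          rw [← emb_self k v, he]
          exact List.mem_map_of_mem (mem_dwalk₁ _ (by omega))
      have notinm : u ∉ cover Tm := by
        rintro ⟨w, hw, hwu⟩
        simp only [hTm, List.mem_cons, List.not_mem_nil, or_false] at hw
        have key : ∀ d : ℕ, (d = 1 ∨ d = 2) → w = (dwalk (gch j c d) k).map (emb k) → False := by
          intro d hd hwd
          subst hwd
          rcases List.mem_map.1 hwu with ⟨n, hn, hne⟩
          rcases dwalk_mem _ hn with ⟨i, hi, rfl⟩ | ⟨i, hi, rfl⟩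
          · have : (3*i : ℕ) = 3*j+c := by
              rw [← huval, ← hne, emb_val k (by omega)]
            omega
          · have hval : (3*i + gch j c d i : ℕ) = 3*j+c := by
              rw [← huval, ← hne, emb_val k (by rw [hgch]; split <;> omega)]
            rw [hgch] at hval
            rcases eq_or_ne i j with rfl | hij
            · rw [if_pos rfl] at hval
              omega
            · rw [if_neg hij] at hval; omega
        rcases hw with rfl | rfl
        · exact key 1 (Or.inl rfl) rfl
        · exact key 2 (Or.inr rfl) rfl
      have hCC : cover Tf ∩ S = cover Tm ∩ S := by
        ext v
        simp only [Set.mem_inter_iff]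
        constructor
        · rintro ⟨-, hvS⟩
          have hvne : v ≠ u := fun h => hnotin (h ▸ hvS)
          exact ⟨fullm v hvne, hvS⟩
        · rintro ⟨-, hvS⟩
          exact ⟨full v, hvS⟩
      have heq := hS (cover Tf) ⟨Tf, hTfT, rfl⟩ (cover Tm) ⟨Tm, hTmT, rfl⟩ hCC
      exact notinm (heq ▸ full u)
    have hinj : Function.Injective
        (fun i : Fin (2*k) => emb k (3*((i:ℕ)/2) + (i:ℕ)%2 + 1)) := by
      intro a b hab
      have ha := a.isLt
      have hb := b.isLt
      have hval : ((emb k (3*((a:ℕ)/2) + (a:ℕ)%2 + 1) : Fin (3*k+1)) : ℕ)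
          = ((emb k (3*((b:ℕ)/2) + (b:ℕ)%2 + 1) : Fin (3*k+1)) : ℕ) := congrArg Fin.val hab
      rw [emb_val k (by omega), emb_val k (by omega)] at hval
      exact Fin.ext (by omega)
    set F : Finset (Fin (3*k+1)) :=
      Finset.image (fun i : Fin (2*k) => emb k (3*((i:ℕ)/2) + (i:ℕ)%2 + 1)) Finset.univ with hF
    have hcard : F.card = 2*k := by
      rw [hF, Finset.card_image_of_injective _ hinj, Finset.card_univ, Fintype.card_fin]
    have hsub : (F : Set (Fin (3*k+1))) ⊆ S := by
      intro x hx
      simp only [hF, Finset.coe_image, Finset.coe_univ, Set.image_univ, Set.mem_range] at hx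
      rcases hx with ⟨i, rfl⟩
      have hik := i.isLt
      exact claim ((i:ℕ)/2) ((i:ℕ)%2 + 1) (by omega) (by omega)
    calc 2*k = F.card := hcard.symm
      _ = (F : Set (Fin (3*k+1))).ncard := (Set.ncard_coe_finset F).symm
      _ ≤ S.ncard := Set.ncard_le_ncard hsub (Set.toFinite S)
end
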